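/- arXiv:2109.12031 — 7 statements merged into one kernel-verified Lean document; each statement's English description precedes it below -/
import Mathlib

section
/- Let H and K be Hilbert spaces and let M ⊆ B(H,K) be a norm-closed subspace satisfying M M* M ⊆ M (a closed TRO). Then the closed linear span of the set {m₁ m₂* m₃ : m₁, m₂, m₃ ∈ M} equals M. -/
open ContinuousLinearMap

lemma aux_poly_bound (s : ℝ) (hs0 : 0 ≤ s) (hs1 : s ≤ 1) (k : ℕ) (hk : 1 ≤ k) :
    s * (1 - s) ^ k ≤ 1 / k := by
  have hkpos : (0:ℝ) < k := by exact_mod_cast hk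
  have h1 : (1 - s) ≤ Real.exp (-s) := by
    have := Real.add_one_le_exp (-s); linarith
  have h2 : (1 - s) ^ k ≤ Real.exp (-((k:ℝ) * s)) := by
    calc (1 - s) ^ k ≤ (Real.exp (-s)) ^ k := pow_le_pow_left₀ (by linarith) h1 k
      _ = Real.exp ((k:ℝ) * (-s)) := by rw [← Real.exp_nat_mul]
      _ = Real.exp (-((k:ℝ) * s)) := by ring_nf
  have h3 : s * (1 - s) ^ k ≤ s * Real.exp (-((k:ℝ) * s)) :=
    mul_le_mul_of_nonneg_left h2 hs0
  refine h3.trans ?_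
  set u : ℝ := (k:ℝ) * s with hu
  have hu0 : 0 ≤ u := by positivity
  have hueq : s = u / k := by rw [hu]; field_simp
  have h4 : u * Real.exp (-u) ≤ 1 := by
    rw [Real.exp_neg]
    have hle : u ≤ Real.exp u := by have := Real.add_one_le_exp u; linarith
    have hep := Real.exp_pos u
    calc u * (Real.exp u)⁻¹ ≤ Real.exp u * (Real.exp u)⁻¹ :=
          mul_le_mul_of_nonneg_right hle (by positivity)
      _ = 1 := by field_simp
  calc s * Real.exp (-u) = (u * Real.exp (-u)) / k := by rw [hueq]; ring
    _ ≤ 1 / k := by gcongr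

set_option maxHeartbeats 1000000 in
/-- A norm-closed subspace `M ⊆ B(H,K)` with `M M* M ⊆ M` satisfies
`[M M* M] = M`, i.e. the closed linear span of triple products equals `M`. -/
theorem stmt_0 {H K : Type*} [NormedAddCommGroup H] [InnerProductSpace ℂ H] [CompleteSpace H]
    [NormedAddCommGroup K] [InnerProductSpace ℂ K] [CompleteSpace K]
    (M : Submodule ℂ (H →L[ℂ] K)) (hM : IsClosed (M : Set (H →L[ℂ] K)))
    (hTRO : ∀ a ∈ M, ∀ b ∈ M, ∀ c ∈ M, a ∘L (adjoint b) ∘L c ∈ M) :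
    closure ((Submodule.span ℂ {x : H →L[ℂ] K |
        ∃ a ∈ M, ∃ b ∈ M, ∃ c ∈ M, x = a ∘L (adjoint b) ∘L c}) : Set (H →L[ℂ] K))
      = (M : Set (H →L[ℂ] K)) := by
  set S : Set (H →L[ℂ] K) := {x : H →L[ℂ] K |
      ∃ a ∈ M, ∃ b ∈ M, ∃ c ∈ M, x = a ∘L (adjoint b) ∘L c} with hS
  set N : Submodule ℂ (H →L[ℂ] K) := Submodule.span ℂ S with hN
  apply Set.Subset.antisymm
  · apply closure_minimal _ hM
    intro x hx
    refine Submodule.span_le.mpr ?_ hx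
    rintro y ⟨a, ha, b, hb, c, hc, rfl⟩
    exact hTRO a ha b hb c hc
  · intro m hm
    obtain ⟨a, ha_def⟩ : ∃ x : H →L[ℂ] H, x = adjoint m ∘L m := ⟨_, rfl⟩
    have ha_pos : 0 ≤ a := by
      rw [ha_def, ContinuousLinearMap.nonneg_iff_isPositive]
      simpa [ContinuousLinearMap.one_def] using (ContinuousLinearMap.isPositive_one (E := K)).adjoint_conj m
    have ha_sa : IsSelfAdjoint a :=
      ((ContinuousLinearMap.nonneg_iff_isPositive a).mp ha_pos).isSelfAdjoint
    have hnorm : ‖a‖ = ‖m‖ * ‖m‖ := by rw [ha_def]; exact norm_adjoint_comp_self m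
    by_cases hR : ‖a‖ = 0
    · have hm0 : m = 0 := by
        have h0 : ‖m‖ * ‖m‖ = 0 := by rw [← hnorm, hR]
        simpa [norm_eq_zero] using mul_self_eq_zero.mp h0
      rw [hm0]
      exact subset_closure (Submodule.zero_mem N)
    have hRpos : 0 < ‖a‖ := lt_of_le_of_ne (norm_nonneg a) (Ne.symm hR)
    obtain ⟨R, hRdef⟩ : ∃ r : ℝ, r = ‖a‖ := ⟨_, rfl⟩
    rw [← hRdef] at hR hRpos
    obtain ⟨b, hb_def⟩ : ∃ x : H →L[ℂ] H, x = 1 - R⁻¹ • a := ⟨_, rfl⟩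
    -- the key induction : m ∘L bⁿ stays in M, and m - m ∘L bⁿ lies in the span N
    have key : ∀ n : ℕ, m ∘L b ^ n ∈ M ∧ m - m ∘L b ^ n ∈ N := by
      intro n
      induction n with
      | zero =>
        have h1 : m ∘L b ^ 0 = m := by
          rw [pow_zero, ContinuousLinearMap.one_def, ContinuousLinearMap.comp_id]
        exact ⟨h1 ▸ hm, by rw [h1, sub_self]; exact N.zero_mem⟩
      | succ n ih =>
        have hy : m ∘L b ^ n ∈ M := ih.1
        have htripleS : (m ∘L b ^ n) ∘L a ∈ S :=
          ⟨m ∘L b ^ n, hy, m, hm, m, hm, by rw [ha_def]⟩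
        have htripleM : (m ∘L b ^ n) ∘L a ∈ M := by
          rw [ha_def]; exact hTRO _ hy m hm m hm
        have hrw : m ∘L b ^ (n + 1) = m ∘L b ^ n - R⁻¹ • ((m ∘L b ^ n) ∘L a) := by
          rw [pow_succ]
          generalize b ^ n = c
          ext x
          simp [hb_def, ContinuousLinearMap.mul_apply, map_sub, sub_apply, smul_apply, -FunLike.coe_pow_eq_iterate]
        constructor
        · rw [hrw]
          exact sub_mem hy (M.smul_of_tower_mem R⁻¹ htripleM)
        · have : m - m ∘L b ^ (n + 1) = (m - m ∘L b ^ n) + R⁻¹ • ((m ∘L b ^ n) ∘L a) := by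
            rw [hrw]; abel
          rw [this]
          exact add_mem ih.2 (N.smul_of_tower_mem R⁻¹ (Submodule.subset_span htripleS))
    -- selfadjointness of b and its powers
    have hb_sa : IsSelfAdjoint b := by
      rw [hb_def]
      rw [IsSelfAdjoint, star_sub, star_one, star_smul, star_trivial, ha_sa.star_eq]
    -- cfc representation
    have hb_cfc : b = cfc (fun t : ℝ => 1 - R⁻¹ * t) a := by
      rw [hb_def, cfc_sub (fun _ : ℝ => (1:ℝ)) (fun t : ℝ => R⁻¹ * t) a,
        cfc_const_mul_id R⁻¹ a, cfc_const (1:ℝ) a, map_one]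
    -- norm bound
    have hbound : ∀ n : ℕ, 1 ≤ n → ‖m ∘L b ^ n‖ * ‖m ∘L b ^ n‖ ≤ R / (2 * n) := by
      intro n hn
      have hx_sa : IsSelfAdjoint (b ^ n) := hb_sa.pow n
      have h1 : ‖m ∘L b ^ n‖ * ‖m ∘L b ^ n‖ = ‖b ^ n * a * b ^ n‖ := by
        rw [← norm_adjoint_comp_self (m ∘L b ^ n)]
        congr 1
        rw [adjoint_comp]
        have hadj : adjoint (b ^ n) = b ^ n := by
          rw [← ContinuousLinearMap.star_eq_adjoint]; exact hx_sa
        rw [hadj, ha_def]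
        ext x
        simp [ContinuousLinearMap.mul_apply]
      have hx_cfc : b ^ n = cfc (fun t : ℝ => (1 - R⁻¹ * t) ^ n) a := by
        rw [cfc_pow (fun t : ℝ => 1 - R⁻¹ * t) n a, ← hb_cfc]
      have hmul : b ^ n * a * b ^ n
          = cfc (fun t : ℝ => ((1 - R⁻¹ * t) ^ n * t) * (1 - R⁻¹ * t) ^ n) a := by
        rw [cfc_mul _ _ a, cfc_mul _ _ a, cfc_id' ℝ a, ← hx_cfc]
      rw [h1, hmul]
      have h2n : (0:ℝ) < 2 * n := by positivity
      apply norm_cfc_le (by positivity)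
      intro x hx
      haveI : Nontrivial H := by
        by_contra hcon
        rw [not_nontrivial_iff_subsingleton] at hcon
        exact hR (by rw [hRdef, Subsingleton.elim a 0, norm_zero])
      have hx0 : 0 ≤ x := spectrum_nonneg_of_nonneg ha_pos hx
      have hxR : x ≤ R := by
        have := spectrum.norm_le_norm_of_mem hx
        rw [Real.norm_eq_abs, abs_of_nonneg hx0] at this
        rw [hRdef]; exact this
      set s : ℝ := R⁻¹ * x with hs
      have hs0 : 0 ≤ s := by positivity
      have hs1 : s ≤ 1 := by
        rw [hs]
        calc R⁻¹ * x ≤ R⁻¹ * R := by gcongr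
          _ = 1 := inv_mul_cancel₀ hR
      have hxs : x = R * s := by rw [hs]; field_simp
      have h1s : (0:ℝ) ≤ 1 - s := by linarith
      have heq : ((1 - s) ^ n * x) * (1 - s) ^ n = R * (s * (1 - s) ^ (2 * n)) := by
        rw [hxs, two_mul, pow_add]; ring
      rw [Real.norm_eq_abs, heq, abs_of_nonneg (by positivity)]
      have haux := aux_poly_bound s hs0 hs1 (2 * n) (by omega)
      push_cast at haux
      calc R * (s * (1 - s) ^ (2 * n)) ≤ R * (1 / (2 * n)) :=
            mul_le_mul_of_nonneg_left haux hRpos.le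
        _ = R / (2 * n) := by ring
    -- conclude
    rw [Metric.mem_closure_iff]
    intro ε hε
    obtain ⟨n, hn⟩ := exists_nat_gt (R / (2 * ε ^ 2))
    set k : ℕ := n + 1 with hk
    have hkb : R / (2 * ε ^ 2) < k := by
      calc R / (2 * ε ^ 2) < n := hn
        _ ≤ k := by exact_mod_cast Nat.le_succ n
    have hkpos : (0:ℝ) < k := by positivity
    have hlt : R / (2 * k) < ε ^ 2 := by
      rw [div_lt_iff₀ (by positivity)] at hkb ⊢
      nlinarith
    obtain ⟨-, hk2⟩ := key k
    refine ⟨m - m ∘L b ^ k, hk2, ?_⟩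
    have hnormk : ‖m ∘L b ^ k‖ * ‖m ∘L b ^ k‖ ≤ R / (2 * k) := hbound k (by omega)
    have : dist m (m - m ∘L b ^ k) = ‖m ∘L b ^ k‖ := by
      rw [dist_eq_norm]; congr 1; abel
    rw [this]
    nlinarith [norm_nonneg (m ∘L b ^ k)]
end

section
/- Let S ⊆ B(H) and T ⊆ B(K) be concrete operator systems. Then S and T are TRO-equivalent (i.e., there exists a non-degenerate TRO M ⊆ B(H,K) with M* T M ⊆ closure(S) and M S M* ⊆ closure(T)) if and only if there exists a TRO M ⊆ B(H,K) such that the closed linear span of M* T M equals closure(S) and the closed linear span of M S M* equals closure(T). -/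
open ContinuousLinearMap

/-- The set of products `a ∘L b` with `a ∈ A`, `b ∈ B`. -/
def opMulSet {H K L : Type*} [NormedAddCommGroup H] [NormedSpace ℂ H]
    [NormedAddCommGroup K] [NormedSpace ℂ K] [NormedAddCommGroup L] [NormedSpace ℂ L]
    (A : Set (K →L[ℂ] L)) (B : Set (H →L[ℂ] K)) : Set (H →L[ℂ] L) :=
  {x | ∃ a ∈ A, ∃ b ∈ B, x = a ∘L b}

/-- The set of adjoints of elements of `M`. -/
noncomputable def opAdjSet {H K : Type*}
    [NormedAddCommGroup H] [InnerProductSpace ℂ H] [CompleteSpace H]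
    [NormedAddCommGroup K] [InnerProductSpace ℂ K] [CompleteSpace K]
    (M : Set (H →L[ℂ] K)) : Set (K →L[ℂ] H) :=
  {x | ∃ m ∈ M, x = adjoint m}

/-- Closed linear span. -/
def cSpan {E : Type*} [NormedAddCommGroup E] [NormedSpace ℂ E] (s : Set E) : Set E :=
  closure ((Submodule.span ℂ s : Submodule ℂ E) : Set E)


section Helpers


lemma key_map {E F : Type*} [NormedAddCommGroup E] [NormedSpace ℂ E]
    [NormedAddCommGroup F] [NormedSpace ℂ F] (φ : E →L[ℂ] F) {P : Set E} {W : Submodule ℂ F}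
    (hPW : ∀ p ∈ P, φ p ∈ closure (W : Set F)) {x : E}
    (hx : x ∈ closure ((Submodule.span ℂ P : Submodule ℂ E) : Set E)) :
    φ x ∈ closure (W : Set F) := by
  have hle : Submodule.span ℂ P ≤ (W.topologicalClosure).comap (φ : E →ₗ[ℂ] F) := by
    rw [Submodule.span_le]
    intro p hp
    simpa [Submodule.mem_comap, ← SetLike.mem_coe, Submodule.topologicalClosure_coe] using hPW p hp
  have hsub : ((Submodule.span ℂ P : Submodule ℂ E) : Set E) ⊆ φ ⁻¹' closure (W : Set F) := by
    intro z hz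
    have := hle hz
    simpa [Submodule.mem_comap, ← SetLike.mem_coe, Submodule.topologicalClosure_coe] using this
  exact closure_minimal hsub (IsClosed.preimage φ.continuous isClosed_closure) hx

lemma adjoint_comp_self_nonneg {X Y : Type*} [NormedAddCommGroup X] [InnerProductSpace ℂ X]
    [CompleteSpace X] [NormedAddCommGroup Y] [InnerProductSpace ℂ Y] [CompleteSpace Y]
    (w : X →L[ℂ] Y) : (0 : X →L[ℂ] X) ≤ adjoint w ∘L w := by
  rw [nonneg_iff_isPositive]
  simpa [ContinuousLinearMap.one_def] using (isPositive_one (E := Y)).adjoint_conj w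

variable {X Y : Type*} [NormedAddCommGroup X] [InnerProductSpace ℂ X] [CompleteSpace X]
  [NormedAddCommGroup Y] [InnerProductSpace ℂ Y] [CompleteSpace Y]

open Polynomial

lemma aeval_mul_mem (N : Submodule ℂ (X →L[ℂ] X))
    (hmul : ∀ b ∈ N, ∀ c ∈ N, b * c ∈ N) {a : X →L[ℂ] X} (haN : a ∈ N) (r : ℝ[X]) :
    a * Polynomial.aeval a r ∈ N := by
  have hpow : ∀ n : ℕ, a ^ (n + 1) ∈ N := by
    intro n
    induction n with
    | zero => simpa using haN
    | succ n ih => rw [pow_succ]; exact hmul _ ih _ haN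
  induction r using Polynomial.induction_on' with
  | add p q hp hq => rw [map_add, mul_add]; exact add_mem hp hq
  | monomial n c =>
      rw [Polynomial.aeval_monomial, ← Algebra.smul_def, mul_smul_comm, ← pow_succ']
      exact Submodule.smul_of_tower_mem N c (hpow n)

lemma scalar_bound {k t : ℝ} (hk : 0 < k) (ht : 0 ≤ t) :
    (k * t + 1)⁻¹ * (t * (k * t + 1)⁻¹) ≤ 1 / k := by
  have htk : 0 < k * t + 1 := by nlinarith
  have hv0 : 0 ≤ (k * t + 1)⁻¹ := le_of_lt (inv_pos.mpr htk)
  have hv1 : (k * t + 1)⁻¹ * (k * t + 1) = 1 := inv_mul_cancel₀ htk.ne'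
  rw [div_eq_mul_inv, one_mul]
  set v := (k * t + 1)⁻¹ with hvdef
  have hvle : v ≤ 1 := by nlinarith
  have hktv : k * t * v = 1 - v := by nlinarith
  have hkinv : 0 < k⁻¹ := inv_pos.mpr hk
  have h1 : k * (v * (t * v)) = (k * t * v) * v := by ring
  have h2 : (k * t * v) * v ≤ 1 := by nlinarith
  calc v * (t * v) = k⁻¹ * (k * (v * (t * v))) := by
        rw [← mul_assoc k⁻¹ k, inv_mul_cancel₀ hk.ne', one_mul]
  _ ≤ k⁻¹ * 1 := by
      apply mul_le_mul_of_nonneg_left _ (le_of_lt hkinv)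
      rw [h1]; exact h2
  _ = k⁻¹ := mul_one _

set_option maxHeartbeats 1000000 in
lemma approxUnit (N : Submodule ℂ (X →L[ℂ] X))
    (hmul : ∀ b ∈ N, ∀ c ∈ N, b * c ∈ N)
    {a : X →L[ℂ] X} (haN : a ∈ N) (ha : 0 ≤ a) {k : ℝ} (hk : 0 < k) :
    ∃ e : X →L[ℂ] X, e ∈ closure (N : Set (X →L[ℂ] X)) ∧ ‖e‖ ≤ 1 ∧
      ∀ w : X →L[ℂ] Y, adjoint w ∘L w ≤ a → ‖w ∘L (1 - e)‖ ^ 2 ≤ 1 / k := by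
  by_cases hX : Subsingleton X
  · refine ⟨0, subset_closure (Submodule.zero_mem N), by simp, fun w _ => ?_⟩
    have hw : w = 0 := by ext x; simp [Subsingleton.elim x 0]
    simp [hw]
    positivity
  · have : Nontrivial X := not_subsingleton_iff_nontrivial.mp hX
    set f : ℝ → ℝ := fun t => 1 - (k * t + 1)⁻¹ with hf
    have hspec : ∀ t ∈ spectrum ℝ a, 0 ≤ t := fun t ht => spectrum_nonneg_of_nonneg ha ht
    have hspec' : ∀ t ∈ spectrum ℝ a, 0 < k * t + 1 := by
      intro t ht; have := hspec t ht; nlinarith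
    have hcf : ContinuousOn f (spectrum ℝ a) := by
      apply continuousOn_const.sub
      exact ContinuousOn.inv₀ (by fun_prop) (fun t ht => (hspec' t ht).ne')
    have hsa : IsSelfAdjoint a := IsSelfAdjoint.of_nonneg ha
    set e : X →L[ℂ] X := cfc f a with he
    have hese : IsSelfAdjoint e := cfc_predicate f a
    have hbound : ∀ t ∈ spectrum ℝ a, 0 ≤ (k * t + 1)⁻¹ ∧ (k * t + 1)⁻¹ ≤ 1 := by
      intro t ht
      constructor
      · exact le_of_lt (inv_pos.mpr (hspec' t ht))
      · rw [inv_le_one_iff₀]; right; have := hspec t ht; nlinarith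
    have hnorme : ‖e‖ ≤ 1 := by
      apply norm_cfc_le zero_le_one
      intro t ht
      obtain ⟨h1, h2⟩ := hbound t ht
      rw [Real.norm_eq_abs, abs_le]
      simp only [hf]
      constructor <;> linarith
    refine ⟨e, ?_, hnorme, ?_⟩
    · -- e ∈ closure N via polynomial approximation
      rw [Metric.mem_closure_iff]
      intro ε hε
      have hδ : (0:ℝ) < ε / 3 := by linarith
      -- approximate f by a polynomial on Icc 0 ‖a‖
      have hFc : Continuous fun t : Set.Icc (0:ℝ) ‖a‖ => f t := by
        apply continuous_const.sub
        apply Continuous.inv₀ (by fun_prop)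
        intro t
        have := t.2.1
        nlinarith
      set F : C(Set.Icc (0:ℝ) ‖a‖, ℝ) := ⟨_, hFc⟩ with hF
      have hFmem : F ∈ closure ((polynomialFunctions (Set.Icc (0:ℝ) ‖a‖) : Set _)) := by
        have := polynomialFunctions_closure_eq_top (0:ℝ) ‖a‖
        rw [← Subalgebra.topologicalClosure_coe, this]
        trivial
      rw [Metric.mem_closure_iff] at hFmem
      obtain ⟨G, hG, hdist⟩ := hFmem _ hδ
      rw [polynomialFunctions_coe] at hG
      obtain ⟨p, rfl⟩ := hG
      set q : ℝ[X] := Polynomial.X * p.divX with hq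
      have hq0 : Polynomial.aeval a q ∈ N := by
        rw [hq, map_mul, Polynomial.aeval_X]
        exact aeval_mul_mem N hmul haN p.divX
      refine ⟨Polynomial.aeval a q, hq0, ?_⟩
      have hqp : ∀ t : ℝ, q.eval t = p.eval t - p.coeff 0 := by
        intro t
        have h := congrArg (Polynomial.eval t) (Polynomial.X_mul_divX_add p)
        simp only [Polynomial.eval_add, Polynomial.eval_mul, Polynomial.eval_X,
          Polynomial.eval_C] at h
        simp only [hq, Polynomial.eval_mul, Polynomial.eval_X]
        linarith
      have hpe : ∀ t ∈ spectrum ℝ a, ‖f t - q.eval t‖ ≤ ε / 3 + ε / 3 := by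
        intro t ht
        have htIcc : t ∈ Set.Icc (0:ℝ) ‖a‖ := by
          refine ⟨hspec t ht, ?_⟩
          have := spectrum.norm_le_norm_of_mem ht
          rwa [Real.norm_eq_abs, abs_of_nonneg (hspec t ht)] at this
        have h1 : |f t - p.eval t| ≤ ε / 3 := by
          have := ContinuousMap.dist_apply_le_dist (f := F)
            (g := Polynomial.toContinuousMapOnAlgHom (Set.Icc (0:ℝ) ‖a‖) p) ⟨t, htIcc⟩
          simp only [hF, ContinuousMap.coe_mk, Polynomial.toContinuousMapOnAlgHom_apply,
            Polynomial.toContinuousMapOn_apply, Polynomial.toContinuousMap_apply] at this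
          rw [Real.dist_eq] at this
          exact this.trans hdist.le
        have h0Icc : (0:ℝ) ∈ Set.Icc (0:ℝ) ‖a‖ := ⟨le_refl _, norm_nonneg a⟩
        have h2 : |p.coeff 0| ≤ ε / 3 := by
          have := ContinuousMap.dist_apply_le_dist (f := F)
            (g := Polynomial.toContinuousMapOnAlgHom (Set.Icc (0:ℝ) ‖a‖) p) ⟨0, h0Icc⟩
          simp only [hF, ContinuousMap.coe_mk, Polynomial.toContinuousMapOnAlgHom_apply,
            Polynomial.toContinuousMapOn_apply, Polynomial.toContinuousMap_apply] at this
          rw [Real.dist_eq] at this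
          have hf0 : f 0 = 0 := by simp [hf]
          have heq : |p.coeff 0| = |f 0 - p.eval 0| := by
            rw [hf0, Polynomial.coeff_zero_eq_eval_zero, zero_sub, abs_neg]
          rw [heq]
          exact this.trans hdist.le
        rw [hqp t, Real.norm_eq_abs]
        have : f t - (p.eval t - p.coeff 0) = (f t - p.eval t) + p.coeff 0 := by ring
        rw [this]
        calc |(f t - p.eval t) + p.coeff 0| ≤ |f t - p.eval t| + |p.coeff 0| := abs_add_le _ _
        _ ≤ ε / 3 + ε / 3 := add_le_add h1 h2
      have hqc : ContinuousOn (fun t : ℝ => q.eval t) (spectrum ℝ a) :=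
        (Polynomial.continuous q).continuousOn
      have : e - Polynomial.aeval a q = cfc (fun t => f t - q.eval t) a := by
        rw [cfc_sub f (fun t => q.eval t) a hcf hqc, he, cfc_polynomial q a]
      rw [dist_eq_norm, this]
      calc ‖cfc (fun t => f t - q.eval t) a‖ ≤ ε / 3 + ε / 3 :=
            norm_cfc_le (by linarith) hpe
      _ < ε := by linarith
    · -- the norm bound
      intro w hw
      have h1e : IsSelfAdjoint ((1 : X →L[ℂ] X) - e) := (IsSelfAdjoint.one (X →L[ℂ] X)).sub hese
      set u := w ∘L (1 - e) with hu
      have hadj : adjoint u ∘L u = (1 - e) * (adjoint w ∘L w) * (1 - e) := by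
        rw [hu, adjoint_comp]
        have : adjoint ((1 : X →L[ℂ] X) - e) = 1 - e := by
          rw [← star_eq_adjoint]; exact h1e.star_eq
        rw [this]
        simp only [ContinuousLinearMap.mul_def]
        simp only [ContinuousLinearMap.comp_assoc]
      have hposu : (0 : X →L[ℂ] X) ≤ adjoint u ∘L u := by
        rw [nonneg_iff_isPositive]
        simpa [ContinuousLinearMap.one_def] using (isPositive_one (E := Y)).adjoint_conj u
      have hconj : (1 - e) * (adjoint w ∘L w) * (1 - e) ≤ (1 - e) * a * (1 - e) := by
        have := star_left_conjugate_le_conjugate hw ((1 : X →L[ℂ] X) - e)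
        rwa [star_sub, star_one, hese.star_eq] at this
      have hnorm1 : ‖adjoint u ∘L u‖ ≤ ‖(1 - e) * a * (1 - e)‖ := by
        apply CStarAlgebra.norm_le_norm_of_nonneg_of_le (hadj ▸ hposu)
        rw [hadj]; exact hconj
      -- identify (1-e) a (1-e) as cfc
      have hc1 : ContinuousOn (fun t : ℝ => 1 - f t) (spectrum ℝ a) :=
        continuousOn_const.sub hcf
      have hc2 : ContinuousOn (fun t : ℝ => t * (1 - f t)) (spectrum ℝ a) :=
        continuousOn_id.mul hc1
      have e1 : cfc (fun t : ℝ => 1 - f t) a = 1 - e := by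
        rw [cfc_sub _ f a continuousOn_const hcf, cfc_const_one ℝ a]
      have e2 : cfc (fun t : ℝ => t * (1 - f t)) a = a * (1 - e) := by
        rw [cfc_mul (fun t : ℝ => t) _ a continuous_id.continuousOn hc1, cfc_id' ℝ a, e1]
      have e3 : cfc (fun t : ℝ => (1 - f t) * (t * (1 - f t))) a = (1 - e) * (a * (1 - e)) := by
        rw [cfc_mul _ _ a hc1 hc2, e1, e2]
      have hnorm2 : ‖(1 - e) * a * (1 - e)‖ ≤ 1 / k := by
        rw [mul_assoc, ← e3]
        apply norm_cfc_le (by positivity)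
        intro t ht
        have ht0 := hspec t ht
        have htk := hspec' t ht
        have h1f : 1 - f t = (k * t + 1)⁻¹ := by simp [hf]
        rw [h1f, Real.norm_eq_abs]
        rw [abs_of_nonneg (by positivity)]
        exact scalar_bound hk ht0
      have hfinal : ‖u‖ ^ 2 ≤ 1 / k := by
        have := norm_adjoint_comp_self u
        calc ‖u‖ ^ 2 = ‖u‖ * ‖u‖ := sq ‖u‖
        _ = ‖adjoint u ∘L u‖ := this.symm
        _ ≤ ‖(1 - e) * a * (1 - e)‖ := hnorm1
        _ ≤ 1 / k := hnorm2
      exact hfinal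

set_option maxHeartbeats 2000000 in
lemma unit_lemma (N : Submodule ℂ (X →L[ℂ] X))
    (hmul : ∀ b ∈ N, ∀ c ∈ N, b * c ∈ N)
    (G : Set (X →L[ℂ] X))
    (hG : ∀ g ∈ G, ∃ z : Y →L[ℂ] X, ∃ w : X →L[ℂ] Y, g = z ∘L w ∧ adjoint w ∘L w ∈ N)
    (h1 : (1 : X →L[ℂ] X) ∈ closure ((Submodule.span ℂ G : Submodule ℂ _) : Set _)) :
    (1 : X →L[ℂ] X) ∈ closure (N : Set (X →L[ℂ] X)) := by
  have key : ∀ ε > 0, ∃ e ∈ closure (N : Set (X →L[ℂ] X)), ‖(1 : X →L[ℂ] X) - e‖ < ε := by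
    intro ε hε
    have hε3 : 0 < ε / 3 := by linarith
    obtain ⟨y, hyspan, hy⟩ :
        ∃ y ∈ (Submodule.span ℂ G : Submodule ℂ _), ‖(1 : X →L[ℂ] X) - y‖ < ε / 3 := by
      rw [Metric.mem_closure_iff] at h1
      obtain ⟨y, hy1, hy2⟩ := h1 _ hε3
      exact ⟨y, hy1, by rwa [dist_eq_norm] at hy2⟩
    obtain ⟨n, c, g, hsum⟩ := Submodule.mem_span_set'.mp hyspan
    choose z w hzw hwN using fun i => hG (g i) (g i).2
    set a : X →L[ℂ] X := ∑ i, adjoint (w i) ∘L (w i) with ha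
    have haN : a ∈ N := Submodule.sum_mem N (fun i _ => hwN i)
    have hapos : 0 ≤ a := Finset.sum_nonneg fun i _ => adjoint_comp_self_nonneg (w i)
    have hle : ∀ i, adjoint (w i) ∘L (w i) ≤ a :=
      fun i => Finset.single_le_sum (f := fun i => adjoint (w i) ∘L (w i))
        (fun j _ => adjoint_comp_self_nonneg (w j)) (Finset.mem_univ i)
    set C : ℝ := ∑ i, ‖c i‖ * ‖z i‖ with hC
    have hC0 : 0 ≤ C := Finset.sum_nonneg fun i _ => by positivity
    set δ : ℝ := (ε / 3) / (C + 1) with hδ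
    have hδ0 : 0 < δ := by positivity
    set k : ℝ := 1 / δ ^ 2 with hk
    have hk0 : 0 < k := by positivity
    obtain ⟨e, heN, henorm, hbound⟩ := approxUnit (Y := Y) N hmul haN hapos hk0
    refine ⟨e, heN, ?_⟩
    have hwb : ∀ i, ‖w i ∘L (1 - e)‖ ≤ δ := by
      intro i
      have h2 := hbound (w i) (hle i)
      have hkδ : (1 : ℝ) / k = δ ^ 2 := by rw [hk]; field_simp
      rw [hkδ] at h2
      calc ‖w i ∘L (1 - e)‖ = Real.sqrt (‖w i ∘L (1 - e)‖ ^ 2) :=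
            (Real.sqrt_sq (norm_nonneg _)).symm
      _ ≤ Real.sqrt (δ ^ 2) := Real.sqrt_le_sqrt h2
      _ = δ := Real.sqrt_sq hδ0.le
    have hye : ‖y * (1 - e)‖ < ε / 3 := by
      have hyexp : y * (1 - e) = ∑ i, c i • (z i ∘L (w i ∘L (1 - e))) := by
        rw [← hsum, Finset.sum_mul]
        refine Finset.sum_congr rfl (fun i _ => ?_)
        rw [smul_mul_assoc, hzw i, ContinuousLinearMap.mul_def,
          ContinuousLinearMap.comp_assoc]
      rw [hyexp]
      calc ‖∑ i, c i • (z i ∘L (w i ∘L (1 - e)))‖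
          ≤ ∑ i, ‖c i • (z i ∘L (w i ∘L (1 - e)))‖ := norm_sum_le _ _
      _ ≤ ∑ i, ‖c i‖ * ‖z i‖ * δ := by
          apply Finset.sum_le_sum
          intro i _
          rw [norm_smul]
          calc ‖c i‖ * ‖z i ∘L (w i ∘L (1 - e))‖
              ≤ ‖c i‖ * (‖z i‖ * ‖w i ∘L (1 - e)‖) :=
                mul_le_mul_of_nonneg_left (opNorm_comp_le _ _) (norm_nonneg _)
          _ ≤ ‖c i‖ * (‖z i‖ * δ) :=
                mul_le_mul_of_nonneg_left
                  (mul_le_mul_of_nonneg_left (hwb i) (norm_nonneg _)) (norm_nonneg _)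
          _ = ‖c i‖ * ‖z i‖ * δ := by ring
      _ = C * δ := by rw [hC, Finset.sum_mul]
      _ < ε / 3 := by
          have h1' : δ * (C + 1) = ε / 3 := div_mul_cancel₀ _ (by positivity)
          nlinarith
    have hdecomp : (1 : X →L[ℂ] X) - e = ((1 : X →L[ℂ] X) - y) + y * (1 - e) + (y - 1) * e := by
      noncomm_ring
    have h3 : ‖(y - 1) * e‖ < ε / 3 := by
      calc ‖(y - 1) * e‖ ≤ ‖y - 1‖ * ‖e‖ := norm_mul_le _ _
      _ ≤ ‖y - 1‖ := mul_le_of_le_one_right (norm_nonneg _) henorm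
      _ = ‖(1 : X →L[ℂ] X) - y‖ := norm_sub_rev _ _
      _ < ε / 3 := hy
    calc ‖(1 : X →L[ℂ] X) - e‖
        = ‖((1 : X →L[ℂ] X) - y) + y * (1 - e) + (y - 1) * e‖ := by rw [← hdecomp]
    _ ≤ ‖((1 : X →L[ℂ] X) - y) + y * (1 - e)‖ + ‖(y - 1) * e‖ := norm_add_le _ _
    _ ≤ ‖(1 : X →L[ℂ] X) - y‖ + ‖y * (1 - e)‖ + ‖(y - 1) * e‖ :=
        add_le_add_left (norm_add_le _ _) _
    _ < ε / 3 + ε / 3 + ε / 3 := add_lt_add (add_lt_add hy hye) h3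
    _ = ε := by ring
  rw [← closure_closure (s := (N : Set (X →L[ℂ] X))), Metric.mem_closure_iff]
  intro ε hε
  obtain ⟨e, he, hne⟩ := key ε hε
  exact ⟨e, he, by rwa [dist_eq_norm]⟩

end Helpers

set_option maxHeartbeats 1000000 in
/-- Concrete operator systems `S ⊆ B(H)`, `T ⊆ B(K)` are TRO-equivalent
(via a non-degenerate TRO `M` with `M* T M ⊆ closure S` and `M S M* ⊆ closure T`)
iff there is a TRO `M` with `[M* T M] = closure S` and `[M S M*] = closure T`. -/
theorem stmt_2 {H K : Type*} [NormedAddCommGroup H] [InnerProductSpace ℂ H] [CompleteSpace H]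
    [NormedAddCommGroup K] [InnerProductSpace ℂ K] [CompleteSpace K]
    (S : Submodule ℂ (H →L[ℂ] H)) (hS1 : (1 : H →L[ℂ] H) ∈ S)
    (hSstar : ∀ s ∈ S, adjoint s ∈ S)
    (T : Submodule ℂ (K →L[ℂ] K)) (hT1 : (1 : K →L[ℂ] K) ∈ T)
    (hTstar : ∀ t ∈ T, adjoint t ∈ T) :
    (∃ M : Submodule ℂ (H →L[ℂ] K),
      (∀ a ∈ M, ∀ b ∈ M, ∀ c ∈ M, a ∘L adjoint b ∘L c ∈ M) ∧
      (1 : H →L[ℂ] H) ∈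
        cSpan (opMulSet (opAdjSet (M : Set (H →L[ℂ] K))) (M : Set (H →L[ℂ] K))) ∧
      (1 : K →L[ℂ] K) ∈
        cSpan (opMulSet (M : Set (H →L[ℂ] K)) (opAdjSet (M : Set (H →L[ℂ] K)))) ∧
      opMulSet (opAdjSet (M : Set (H →L[ℂ] K)))
          (opMulSet (T : Set (K →L[ℂ] K)) (M : Set (H →L[ℂ] K)))
        ⊆ closure (S : Set (H →L[ℂ] H)) ∧
      opMulSet (M : Set (H →L[ℂ] K))
          (opMulSet (S : Set (H →L[ℂ] H)) (opAdjSet (M : Set (H →L[ℂ] K))))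
        ⊆ closure (T : Set (K →L[ℂ] K)))
    ↔
    (∃ M : Submodule ℂ (H →L[ℂ] K),
      (∀ a ∈ M, ∀ b ∈ M, ∀ c ∈ M, a ∘L adjoint b ∘L c ∈ M) ∧
      cSpan (opMulSet (opAdjSet (M : Set (H →L[ℂ] K)))
          (opMulSet (T : Set (K →L[ℂ] K)) (M : Set (H →L[ℂ] K))))
        = closure (S : Set (H →L[ℂ] H)) ∧
      cSpan (opMulSet (M : Set (H →L[ℂ] K))
          (opMulSet (S : Set (H →L[ℂ] H)) (opAdjSet (M : Set (H →L[ℂ] K)))))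
        = closure (T : Set (K →L[ℂ] K))) := by
  constructor
  · rintro ⟨M, hTRO, h1H, h1K, hMS, hMT⟩
    refine ⟨M, hTRO, ?_, ?_⟩
    · -- cSpan (M* T M) = closure S
      apply Set.Subset.antisymm
      · intro x hx
        simpa using key_map (ContinuousLinearMap.id ℂ (H →L[ℂ] H))
          (W := S) (fun p hp => by simpa using hMS hp) hx
      · refine closure_minimal (fun s hs => ?_) isClosed_closure
        -- s ∈ closure span (M* T M)
        set GS := opMulSet (opAdjSet (M : Set (H →L[ℂ] K)))
          (opMulSet (T : Set (K →L[ℂ] K)) (M : Set (H →L[ℂ] K))) with hGS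
        set W := Submodule.span ℂ GS with hW
        have step1 : ∀ p ∈ opMulSet (opAdjSet (M : Set (H →L[ℂ] K))) (M : Set (H →L[ℂ] K)),
            ∀ q ∈ opMulSet (opAdjSet (M : Set (H →L[ℂ] K))) (M : Set (H →L[ℂ] K)),
            (p ∘L s) ∘L q ∈ closure (W : Set (H →L[ℂ] H)) := by
          rintro p ⟨a, ⟨m₁, hm₁, rfl⟩, m₂, hm₂, rfl⟩ q ⟨b, ⟨m₃, hm₃, rfl⟩, m₄, hm₄, rfl⟩
          have hmid : m₂ ∘L (s ∘L adjoint m₃) ∈ closure (T : Set (K →L[ℂ] K)) :=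
            hMT ⟨m₂, hm₂, s ∘L adjoint m₃, ⟨s, hs, adjoint m₃, ⟨m₃, hm₃, rfl⟩, rfl⟩, rfl⟩
          have hmid' : m₂ ∘L (s ∘L adjoint m₃) ∈
              closure ((Submodule.span ℂ (T : Set (K →L[ℂ] K)) :
                Submodule ℂ (K →L[ℂ] K)) : Set (K →L[ℂ] K)) := by
            rwa [Submodule.span_eq]
          have := key_map
            ((compL ℂ H K H (adjoint m₁)).comp ((compL ℂ H K K).flip m₄))
            (P := (T : Set (K →L[ℂ] K))) (W := W)
            (fun t ht => by
              simp only [ContinuousLinearMap.coe_comp', Function.comp_apply, flip_apply,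
                compL_apply]
              exact subset_closure (Submodule.subset_span
                ⟨adjoint m₁, ⟨m₁, hm₁, rfl⟩, t ∘L m₄, ⟨t, ht, m₄, hm₄, rfl⟩, rfl⟩))
            hmid'
          simp only [ContinuousLinearMap.coe_comp', Function.comp_apply, flip_apply,
            compL_apply] at this
          have heq : ((adjoint m₁ ∘L m₂) ∘L s) ∘L (adjoint m₃ ∘L m₄)
              = adjoint m₁ ∘L ((m₂ ∘L (s ∘L adjoint m₃)) ∘L m₄) := by
            simp only [ContinuousLinearMap.comp_assoc]
          rw [heq]
          exact this
        have step2 : ∀ p ∈ opMulSet (opAdjSet (M : Set (H →L[ℂ] K))) (M : Set (H →L[ℂ] K)),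
            p ∘L s ∈ closure (W : Set (H →L[ℂ] H)) := by
          intro p hp
          have := key_map (compL ℂ H H H (p ∘L s)) (W := W)
            (fun q hq => by simpa using step1 p hp q hq) h1H
          simpa [ContinuousLinearMap.one_def] using this
        have := key_map ((compL ℂ H H H).flip s) (W := W)
          (fun p hp => by simpa using step2 p hp) h1H
        simp [ContinuousLinearMap.one_def] at this; exact this
    · -- cSpan (M S M*) = closure T
      apply Set.Subset.antisymm
      · intro x hx
        simpa using key_map (ContinuousLinearMap.id ℂ (K →L[ℂ] K))
          (W := T) (fun p hp => by simpa using hMT hp) hx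
      · refine closure_minimal (fun t ht => ?_) isClosed_closure
        set GT := opMulSet (M : Set (H →L[ℂ] K))
          (opMulSet (S : Set (H →L[ℂ] H)) (opAdjSet (M : Set (H →L[ℂ] K)))) with hGT
        set W := Submodule.span ℂ GT with hW
        have step1 : ∀ p ∈ opMulSet (M : Set (H →L[ℂ] K)) (opAdjSet (M : Set (H →L[ℂ] K))),
            ∀ q ∈ opMulSet (M : Set (H →L[ℂ] K)) (opAdjSet (M : Set (H →L[ℂ] K))),
            (p ∘L t) ∘L q ∈ closure (W : Set (K →L[ℂ] K)) := by
          rintro p ⟨m₁, hm₁, a, ⟨m₂, hm₂, rfl⟩, rfl⟩ q ⟨m₃, hm₃, b, ⟨m₄, hm₄, rfl⟩, rfl⟩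
          have hmid : adjoint m₂ ∘L (t ∘L m₃) ∈ closure (S : Set (H →L[ℂ] H)) :=
            hMS ⟨adjoint m₂, ⟨m₂, hm₂, rfl⟩, t ∘L m₃, ⟨t, ht, m₃, hm₃, rfl⟩, rfl⟩
          have hmid' : adjoint m₂ ∘L (t ∘L m₃) ∈
              closure ((Submodule.span ℂ (S : Set (H →L[ℂ] H)) :
                Submodule ℂ (H →L[ℂ] H)) : Set (H →L[ℂ] H)) := by
            rwa [Submodule.span_eq]
          have := key_map
            ((compL ℂ K H K m₁).comp ((compL ℂ K H H).flip (adjoint m₄)))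
            (P := (S : Set (H →L[ℂ] H))) (W := W)
            (fun s hs => by
              simp only [ContinuousLinearMap.coe_comp', Function.comp_apply, flip_apply,
                compL_apply]
              exact subset_closure (Submodule.subset_span
                ⟨m₁, hm₁, s ∘L adjoint m₄, ⟨s, hs, adjoint m₄, ⟨m₄, hm₄, rfl⟩, rfl⟩, rfl⟩))
            hmid'
          simp only [ContinuousLinearMap.coe_comp', Function.comp_apply, flip_apply,
            compL_apply] at this
          have heq : ((m₁ ∘L adjoint m₂) ∘L t) ∘L (m₃ ∘L adjoint m₄)
              = m₁ ∘L ((adjoint m₂ ∘L (t ∘L m₃)) ∘L adjoint m₄) := by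
            simp only [ContinuousLinearMap.comp_assoc]
          rw [heq]
          exact this
        have step2 : ∀ p ∈ opMulSet (M : Set (H →L[ℂ] K)) (opAdjSet (M : Set (H →L[ℂ] K))),
            p ∘L t ∈ closure (W : Set (K →L[ℂ] K)) := by
          intro p hp
          have := key_map (compL ℂ K K K (p ∘L t)) (W := W)
            (fun q hq => by simpa using step1 p hp q hq) h1K
          simpa [ContinuousLinearMap.one_def] using this
        have := key_map ((compL ℂ K K K).flip t) (W := W)
          (fun p hp => by simpa using step2 p hp) h1K
        simp [ContinuousLinearMap.one_def] at this; exact this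
  · rintro ⟨M, hTRO, hES, hET⟩
    have hsubS : opMulSet (opAdjSet (M : Set (H →L[ℂ] K)))
        (opMulSet (T : Set (K →L[ℂ] K)) (M : Set (H →L[ℂ] K)))
        ⊆ closure (S : Set (H →L[ℂ] H)) := by
      rw [← hES]; exact fun x hx => subset_closure (Submodule.subset_span hx)
    have hsubT : opMulSet (M : Set (H →L[ℂ] K))
        (opMulSet (S : Set (H →L[ℂ] H)) (opAdjSet (M : Set (H →L[ℂ] K))))
        ⊆ closure (T : Set (K →L[ℂ] K)) := by
      rw [← hET]; exact fun x hx => subset_closure (Submodule.subset_span hx)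
    refine ⟨M, hTRO, ?_, ?_, hsubS, hsubT⟩
    · -- 1_H ∈ cSpan (M* M)
      set GH := opMulSet (opAdjSet (M : Set (H →L[ℂ] K))) (M : Set (H →L[ℂ] K)) with hGH
      set N := Submodule.span ℂ GH with hN
      have hgen : ∀ p ∈ GH, ∀ q ∈ GH, p * q ∈ N := by
        rintro p ⟨a, ⟨m₁, hm₁, rfl⟩, m₂, hm₂, rfl⟩ q ⟨b, ⟨m₃, hm₃, rfl⟩, m₄, hm₄, rfl⟩
        apply Submodule.subset_span
        refine ⟨adjoint m₁, ⟨m₁, hm₁, rfl⟩, m₂ ∘L (adjoint m₃ ∘L m₄),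
          hTRO _ hm₂ _ hm₃ _ hm₄, ?_⟩
        rw [ContinuousLinearMap.mul_def]
        simp only [ContinuousLinearMap.comp_assoc]
      have hmul : ∀ b ∈ N, ∀ c ∈ N, b * c ∈ N := by
        intro b hb c hc
        induction hb using Submodule.span_induction with
        | mem x hx =>
          induction hc using Submodule.span_induction with
          | mem y hy => exact hgen x hx y hy
          | zero => rw [mul_zero]; exact Submodule.zero_mem _
          | add y z _ _ hy' hz' => rw [mul_add]; exact add_mem hy' hz'
          | smul r y _ hy' => rw [mul_smul_comm]; exact Submodule.smul_mem _ r hy'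
        | zero => rw [zero_mul]; exact Submodule.zero_mem _
        | add y z _ _ hy' hz' => rw [add_mul]; exact add_mem hy' hz'
        | smul r y _ hy' => rw [smul_mul_assoc]; exact Submodule.smul_mem _ r hy'
      apply unit_lemma (Y := K) N hmul
        (opMulSet (opAdjSet (M : Set (H →L[ℂ] K)))
          (opMulSet (T : Set (K →L[ℂ] K)) (M : Set (H →L[ℂ] K))))
        ?_ ?_
      · rintro g ⟨a, ⟨m, hm, rfl⟩, b, ⟨t, ht, n, hn, rfl⟩, rfl⟩
        refine ⟨adjoint m ∘L t, n, ?_, ?_⟩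
        · simp only [ContinuousLinearMap.comp_assoc]
        · exact Submodule.subset_span ⟨adjoint n, ⟨n, hn, rfl⟩, n, hn, rfl⟩
      · show (1 : H →L[ℂ] H) ∈ cSpan (opMulSet (opAdjSet (M : Set (H →L[ℂ] K)))
          (opMulSet (T : Set (K →L[ℂ] K)) (M : Set (H →L[ℂ] K))))
        rw [hES]
        exact subset_closure hS1
    · -- 1_K ∈ cSpan (M M*)
      set GK := opMulSet (M : Set (H →L[ℂ] K)) (opAdjSet (M : Set (H →L[ℂ] K))) with hGK
      set N := Submodule.span ℂ GK with hN
      have hgen : ∀ p ∈ GK, ∀ q ∈ GK, p * q ∈ N := by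
        rintro p ⟨m₁, hm₁, a, ⟨m₂, hm₂, rfl⟩, rfl⟩ q ⟨m₃, hm₃, b, ⟨m₄, hm₄, rfl⟩, rfl⟩
        apply Submodule.subset_span
        refine ⟨m₁ ∘L (adjoint m₂ ∘L m₃), hTRO _ hm₁ _ hm₂ _ hm₃,
          adjoint m₄, ⟨m₄, hm₄, rfl⟩, ?_⟩
        rw [ContinuousLinearMap.mul_def]
        simp only [ContinuousLinearMap.comp_assoc]
      have hmul : ∀ b ∈ N, ∀ c ∈ N, b * c ∈ N := by
        intro b hb c hc
        induction hb using Submodule.span_induction with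
        | mem x hx =>
          induction hc using Submodule.span_induction with
          | mem y hy => exact hgen x hx y hy
          | zero => rw [mul_zero]; exact Submodule.zero_mem _
          | add y z _ _ hy' hz' => rw [mul_add]; exact add_mem hy' hz'
          | smul r y _ hy' => rw [mul_smul_comm]; exact Submodule.smul_mem _ r hy'
        | zero => rw [zero_mul]; exact Submodule.zero_mem _
        | add y z _ _ hy' hz' => rw [add_mul]; exact add_mem hy' hz'
        | smul r y _ hy' => rw [smul_mul_assoc]; exact Submodule.smul_mem _ r hy'
      apply unit_lemma (Y := H) N hmul
        (opMulSet (M : Set (H →L[ℂ] K))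
          (opMulSet (S : Set (H →L[ℂ] H)) (opAdjSet (M : Set (H →L[ℂ] K)))))
        ?_ ?_
      · rintro g ⟨m, hm, b, ⟨s, hs, a, ⟨n, hn, rfl⟩, rfl⟩, rfl⟩
        refine ⟨m ∘L s, adjoint n, ?_, ?_⟩
        · simp only [ContinuousLinearMap.comp_assoc]
        · rw [adjoint_adjoint]
          exact Submodule.subset_span ⟨n, hn, adjoint n, ⟨n, hn, rfl⟩, rfl⟩
      · show (1 : K →L[ℂ] K) ∈ cSpan (opMulSet (M : Set (H →L[ℂ] K))
          (opMulSet (S : Set (H →L[ℂ] H)) (opAdjSet (M : Set (H →L[ℂ] K)))))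
        rw [hET]
        exact subset_closure hT1
end

section
/- Let S ⊆ B(H) and T ⊆ B(K) be operator systems and let X ⊆ B(H,K) be a non-degenerate operator space with X* T X ⊆ closure(S) and X S X* ⊆ closure(T). Let A be the C*-algebra generated by X* X and let M be the closed linear span of X A. Then M is a closed TRO (M M* M ⊆ M), M is non-degenerate, M* T M ⊆ closure(S), and M S M* ⊆ closure(T); in particular S and T are TRO-equivalent via M. -/
open ContinuousLinearMap

lemma cSpan_mono {E : Type*} [NormedAddCommGroup E] [NormedSpace ℂ E]
    {s t : Set E} (h : s ⊆ t) : cSpan s ⊆ cSpan t :=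
  closure_mono (Submodule.span_mono h)

lemma subset_cSpan {E : Type*} [NormedAddCommGroup E] [NormedSpace ℂ E] (s : Set E) :
    s ⊆ cSpan s :=
  fun x hx => subset_closure (Submodule.subset_span hx)

lemma auxMem {E F : Type*} [NormedAddCommGroup E] [NormedSpace ℂ E]
    [NormedAddCommGroup F] [NormedSpace ℂ F]
    (f : E → F) (hf : Continuous f) (hadd : ∀ a b, f (a + b) = f a + f b)
    (hsmul : ∀ (c : ℂ) (a : E), ∃ d : ℂ, f (c • a) = d • f a)
    (C : Submodule ℂ F) (hC : IsClosed (C : Set F))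
    (U : Set E) (hU : ∀ u ∈ U, f u ∈ C)
    {x : E} (hx : x ∈ cSpan U) : f x ∈ C := by
  have h0 : f 0 = 0 := by
    have h := hadd 0 0
    rw [add_zero] at h
    exact (add_eq_left (a := f 0)).mp h.symm
  have hsub : ((Submodule.span ℂ U : Submodule ℂ E) : Set E) ⊆ f ⁻¹' (C : Set F) := by
    intro y hy
    induction hy using Submodule.span_induction with
    | mem u hu => exact hU u hu
    | zero => simp only [Set.mem_preimage, h0]; exact C.zero_mem
    | add a b _ _ ha hb => simp only [Set.mem_preimage, hadd]; exact C.add_mem ha hb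
    | smul c a _ ha =>
        obtain ⟨d, hd⟩ := hsmul c a
        simp only [Set.mem_preimage, hd]; exact C.smul_mem d ha
  exact closure_minimal hsub (hC.preimage hf) hx

lemma aux_lin {H₁ K₁ H₂ K₂ : Type*}
    [NormedAddCommGroup H₁] [NormedSpace ℂ H₁] [NormedAddCommGroup K₁] [NormedSpace ℂ K₁]
    [NormedAddCommGroup H₂] [NormedSpace ℂ H₂] [NormedAddCommGroup K₂] [NormedSpace ℂ K₂]
    (p : K₁ →L[ℂ] K₂) (q : H₂ →L[ℂ] H₁) (C : Submodule ℂ (H₂ →L[ℂ] K₂))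
    (hC : IsClosed (C : Set (H₂ →L[ℂ] K₂))) (U : Set (H₁ →L[ℂ] K₁))
    (hU : ∀ u ∈ U, p ∘L u ∘L q ∈ C) {t : H₁ →L[ℂ] K₁} (ht : t ∈ cSpan U) :
    p ∘L t ∘L q ∈ C := by
  refine auxMem (fun t => p ∘L t ∘L q) ?_ ?_ ?_ C hC U hU ht
  · exact continuous_const.clm_comp (continuous_id.clm_comp continuous_const)
  · intro a b; ext v; simp
  · intro c a; exact ⟨c, by ext v; simp⟩

lemma aux_adj {H₁ K₁ : Type*}
    [NormedAddCommGroup H₁] [InnerProductSpace ℂ H₁] [CompleteSpace H₁]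
    [NormedAddCommGroup K₁] [InnerProductSpace ℂ K₁] [CompleteSpace K₁]
    {H₂ K₂ : Type*}
    [NormedAddCommGroup H₂] [NormedSpace ℂ H₂] [NormedAddCommGroup K₂] [NormedSpace ℂ K₂]
    (p : H₁ →L[ℂ] K₂) (q : H₂ →L[ℂ] K₁) (C : Submodule ℂ (H₂ →L[ℂ] K₂))
    (hC : IsClosed (C : Set (H₂ →L[ℂ] K₂))) (U : Set (H₁ →L[ℂ] K₁))
    (hU : ∀ u ∈ U, p ∘L adjoint u ∘L q ∈ C) {m : H₁ →L[ℂ] K₁} (hm : m ∈ cSpan U) :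
    p ∘L adjoint m ∘L q ∈ C := by
  refine auxMem (fun m => p ∘L adjoint m ∘L q) ?_ ?_ ?_ C hC U hU hm
  · exact continuous_const.clm_comp
      (((ContinuousLinearMap.adjoint (E := H₁) (F := K₁) (𝕜 := ℂ)).continuous).clm_comp
        continuous_const)
  · intro a b
    show p ∘L adjoint (a + b) ∘L q = p ∘L adjoint a ∘L q + p ∘L adjoint b ∘L q
    rw [map_add (ContinuousLinearMap.adjoint (E := H₁) (F := K₁) (𝕜 := ℂ)) a b]
    ext v; simp
  · intro c a
    refine ⟨(starRingEnd ℂ) c, ?_⟩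
    show p ∘L adjoint (c • a) ∘L q = (starRingEnd ℂ) c • (p ∘L adjoint a ∘L q)
    rw [map_smulₛₗ (ContinuousLinearMap.adjoint (E := H₁) (F := K₁) (𝕜 := ℂ)) c a]
    ext v; simp

set_option maxHeartbeats 2000000 in
/-- If `X` is a non-degenerate operator space with `X* T X ⊆ closure S` and
`X S X* ⊆ closure T`, and `A = C*(X* X)`, `M = [X A]`, then `M` is a closed
non-degenerate TRO implementing a TRO-equivalence of `S` and `T`. -/
theorem stmt_3 {H K : Type*} [NormedAddCommGroup H] [InnerProductSpace ℂ H] [CompleteSpace H]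
    [NormedAddCommGroup K] [InnerProductSpace ℂ K] [CompleteSpace K]
    (S : Submodule ℂ (H →L[ℂ] H)) (hS1 : (1 : H →L[ℂ] H) ∈ S)
    (hSstar : ∀ s ∈ S, adjoint s ∈ S)
    (T : Submodule ℂ (K →L[ℂ] K)) (hT1 : (1 : K →L[ℂ] K) ∈ T)
    (hTstar : ∀ t ∈ T, adjoint t ∈ T)
    (X : Submodule ℂ (H →L[ℂ] K))
    (hXnd1 : (1 : H →L[ℂ] H) ∈
      cSpan (opMulSet (opAdjSet (X : Set (H →L[ℂ] K))) (X : Set (H →L[ℂ] K))))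
    (hXnd2 : (1 : K →L[ℂ] K) ∈
      cSpan (opMulSet (X : Set (H →L[ℂ] K)) (opAdjSet (X : Set (H →L[ℂ] K)))))
    (hXTX : opMulSet (opAdjSet (X : Set (H →L[ℂ] K)))
        (opMulSet (T : Set (K →L[ℂ] K)) (X : Set (H →L[ℂ] K)))
      ⊆ closure (S : Set (H →L[ℂ] H)))
    (hXSX : opMulSet (X : Set (H →L[ℂ] K))
        (opMulSet (S : Set (H →L[ℂ] H)) (opAdjSet (X : Set (H →L[ℂ] K))))
      ⊆ closure (T : Set (K →L[ℂ] K)))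
    (A : Set (H →L[ℂ] H))
    (hA : A = closure ((NonUnitalStarAlgebra.adjoin ℂ
        (opMulSet (opAdjSet (X : Set (H →L[ℂ] K))) (X : Set (H →L[ℂ] K))) :
        NonUnitalStarSubalgebra ℂ (H →L[ℂ] H)) : Set (H →L[ℂ] H)))
    (M : Set (H →L[ℂ] K))
    (hM : M = cSpan (opMulSet (X : Set (H →L[ℂ] K)) A)) :
    IsClosed M ∧
    (∀ a ∈ M, ∀ b ∈ M, ∀ c ∈ M, a ∘L adjoint b ∘L c ∈ M) ∧
    (1 : H →L[ℂ] H) ∈ cSpan (opMulSet (opAdjSet M) M) ∧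
    (1 : K →L[ℂ] K) ∈ cSpan (opMulSet M (opAdjSet M)) ∧
    opMulSet (opAdjSet M) (opMulSet (T : Set (K →L[ℂ] K)) M)
      ⊆ closure (S : Set (H →L[ℂ] H)) ∧
    opMulSet M (opMulSet (S : Set (H →L[ℂ] H)) (opAdjSet M))
      ⊆ closure (T : Set (K →L[ℂ] K)) := by
  set Xs : Set (H →L[ℂ] K) := (X : Set (H →L[ℂ] K)) with hXsdef
  set XX : Set (H →L[ℂ] H) := opMulSet (opAdjSet Xs) Xs with hXXdef
  -- closures of S, T as submodules
  set SCm : Submodule ℂ (H →L[ℂ] H) := S.topologicalClosure with hSCmdef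
  set TCm : Submodule ℂ (K →L[ℂ] K) := T.topologicalClosure with hTCmdef
  have hSCc : IsClosed (SCm : Set (H →L[ℂ] H)) := S.isClosed_topologicalClosure
  have hTCc : IsClosed (TCm : Set (K →L[ℂ] K)) := T.isClosed_topologicalClosure
  have hSCset : (SCm : Set (H →L[ℂ] H)) = closure (S : Set (H →L[ℂ] H)) := rfl
  have hTCset : (TCm : Set (K →L[ℂ] K)) = closure (T : Set (K →L[ℂ] K)) := rfl
  have hSCstar : ∀ s, s ∈ SCm → adjoint s ∈ SCm := by
    intro s hs
    have h2 : star s ∈ closure (S : Set (H →L[ℂ] H)) :=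
      map_mem_closure continuous_star hs
        (fun y hy => by
          show star y ∈ (S : Set (H →L[ℂ] H))
          rw [star_eq_adjoint]; exact hSstar y hy)
    rw [star_eq_adjoint] at h2
    exact h2
  -- L1 / L2
  have L1 : ∀ x ∈ X, ∀ x' ∈ X, ∀ t ∈ TCm, adjoint x ∘L t ∘L x' ∈ SCm := by
    intro x hx x' hx' t ht
    refine aux_lin (adjoint x) x' SCm hSCc (T : Set (K →L[ℂ] K)) ?_ ?_
    · intro u hu
      exact hXTX ⟨adjoint x, ⟨x, hx, rfl⟩, u ∘L x', ⟨u, hu, x', hx', rfl⟩, rfl⟩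
    · show t ∈ cSpan (T : Set (K →L[ℂ] K))
      rw [cSpan, Submodule.span_eq]
      exact ht
  have L2 : ∀ x ∈ X, ∀ x' ∈ X, ∀ s ∈ SCm, x ∘L s ∘L adjoint x' ∈ TCm := by
    intro x hx x' hx' s hs
    refine aux_lin x (adjoint x') TCm hTCc (S : Set (H →L[ℂ] H)) ?_ ?_
    · intro u hu
      exact hXSX ⟨x, hx, u ∘L adjoint x', ⟨u, hu, adjoint x', ⟨x', hx', rfl⟩, rfl⟩, rfl⟩
    · show s ∈ cSpan (S : Set (H →L[ℂ] H))
      rw [cSpan, Submodule.span_eq]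
      exact hs
  -- the algebra A
  set Acl : NonUnitalStarSubalgebra ℂ (H →L[ℂ] H) :=
    (NonUnitalStarAlgebra.adjoin ℂ XX).topologicalClosure with hAcldef
  have hAset : A = (Acl : Set (H →L[ℂ] H)) := hA
  have hAmem : ∀ {a : H →L[ℂ] H}, a ∈ A ↔ a ∈ Acl := by
    intro a; rw [hAset]; exact Iff.rfl
  have hAmul : ∀ a ∈ A, ∀ b ∈ A, a ∘L b ∈ A := by
    intro a ha b hb
    have h := mul_mem (hAmem.mp ha) (hAmem.mp hb)
    rw [mul_def] at h
    exact hAmem.mpr h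
  have hAstar : ∀ a ∈ A, adjoint a ∈ A := by
    intro a ha
    have h := star_mem (hAmem.mp ha)
    rw [star_eq_adjoint] at h
    exact hAmem.mpr h
  have hXXA : XX ⊆ A := by
    intro u hu
    rw [hAset]
    exact subset_closure (NonUnitalStarAlgebra.subset_adjoin ℂ XX hu)
  have hA1 : (1 : H →L[ℂ] H) ∈ A := by
    have hspan : ((Submodule.span ℂ XX : Submodule ℂ (H →L[ℂ] H)) : Set (H →L[ℂ] H)) ⊆
        ((NonUnitalStarAlgebra.adjoin ℂ XX : NonUnitalStarSubalgebra ℂ (H →L[ℂ] H)) :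
          Set (H →L[ℂ] H)) := by
      intro y hy
      induction hy using Submodule.span_induction with
      | mem u hu => exact NonUnitalStarAlgebra.subset_adjoin ℂ XX hu
      | zero => exact zero_mem _
      | add a b _ _ ha hb => exact add_mem ha hb
      | smul c a _ ha => exact SMulMemClass.smul_mem c ha
    rw [hA]
    exact closure_mono hspan hXnd1
  -- one-sided stability of closure S under generators
  have hC1 : ∀ s ∈ SCm, ∀ x1 ∈ X, ∀ x2 ∈ X, s ∘L (adjoint x1 ∘L x2) ∈ SCm := by
    intro s hs x1 hx1 x2 hx2
    have h := aux_lin (1 : H →L[ℂ] H) (s ∘L (adjoint x1 ∘L x2)) SCm hSCc XX ?_ hXnd1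
    · rwa [show (1 : H →L[ℂ] H) ∘L (1 : H →L[ℂ] H) ∘L (s ∘L (adjoint x1 ∘L x2)) =
        s ∘L (adjoint x1 ∘L x2) from by ext v; rfl] at h
    · intro u hu
      obtain ⟨a, ha, x', hx', rfl⟩ := hu
      obtain ⟨x, hx, rfl⟩ := ha
      have ht' := L2 x' hx' x1 hx1 s hs
      have h2 := L1 x hx x2 hx2 _ ht'
      rwa [show adjoint x ∘L (x' ∘L s ∘L adjoint x1) ∘L x2 =
        (1 : H →L[ℂ] H) ∘L (adjoint x ∘L x') ∘L (s ∘L (adjoint x1 ∘L x2)) from by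
          ext v; rfl] at h2
  have hC1' : ∀ s ∈ SCm, ∀ x1 ∈ X, ∀ x2 ∈ X, (adjoint x1 ∘L x2) ∘L s ∈ SCm := by
    intro s hs x1 hx1 x2 hx2
    have h := hC1 (adjoint s) (hSCstar s hs) x2 hx2 x1 hx1
    have h2 := hSCstar _ h
    rwa [show adjoint (adjoint s ∘L (adjoint x2 ∘L x1)) = (adjoint x1 ∘L x2) ∘L s from by
      rw [adjoint_comp, adjoint_comp, adjoint_adjoint, adjoint_adjoint]] at h2
  -- stability of closure S under A on both sides
  have hP0 : ∀ a ∈ NonUnitalStarAlgebra.adjoin ℂ XX, ∀ s ∈ SCm,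
      a ∘L s ∈ SCm ∧ s ∘L a ∈ SCm := by
    intro a ha
    induction ha using NonUnitalStarAlgebra.adjoin_induction with
    | mem u hu =>
        intro s hs
        obtain ⟨av, hav, x', hx', rfl⟩ := hu
        obtain ⟨x, hx, rfl⟩ := hav
        exact ⟨hC1' s hs x hx x' hx', hC1 s hs x hx x' hx'⟩
    | add x y hx hy px py =>
        intro s hs
        constructor
        · rw [add_comp]; exact SCm.add_mem (px s hs).1 (py s hs).1
        · rw [comp_add]; exact SCm.add_mem (px s hs).2 (py s hs).2
    | zero =>
        intro s hs
        constructor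
        · rw [zero_comp]; exact SCm.zero_mem
        · rw [comp_zero]; exact SCm.zero_mem
    | mul x y hx hy px py =>
        intro s hs
        constructor
        · rw [mul_def, show (x ∘L y) ∘L s = x ∘L (y ∘L s) from by ext v; rfl]
          exact (px _ ((py s hs).1)).1
        · rw [mul_def, show s ∘L (x ∘L y) = (s ∘L x) ∘L y from by ext v; rfl]
          exact (py _ ((px s hs).2)).2
    | smul c x hx px =>
        intro s hs
        constructor
        · rw [smul_comp]; exact SCm.smul_mem c (px s hs).1
        · rw [comp_smul]; exact SCm.smul_mem c (px s hs).2
    | star x hx px =>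
        intro s hs
        constructor
        · have h := (px (adjoint s) (hSCstar s hs)).2
          have h2 := hSCstar _ h
          rwa [show adjoint (adjoint s ∘L x) = star x ∘L s from by
            rw [adjoint_comp, adjoint_adjoint, star_eq_adjoint]] at h2
        · have h := (px (adjoint s) (hSCstar s hs)).1
          have h2 := hSCstar _ h
          rwa [show adjoint (x ∘L adjoint s) = s ∘L star x from by
            rw [adjoint_comp, adjoint_adjoint, star_eq_adjoint]] at h2
  have hAP : ∀ a ∈ A, ∀ s ∈ SCm, a ∘L s ∈ SCm ∧ s ∘L a ∈ SCm := by
    intro a ha s hs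
    have haC : a ∈ cSpan ((NonUnitalStarAlgebra.adjoin ℂ XX :
        NonUnitalStarSubalgebra ℂ (H →L[ℂ] H)) : Set (H →L[ℂ] H)) := by
      rw [hAset] at ha
      exact closure_mono Submodule.subset_span ha
    constructor
    · have h := aux_lin (1 : H →L[ℂ] H) s SCm hSCc _ ?_ haC
      · rwa [show (1 : H →L[ℂ] H) ∘L a ∘L s = a ∘L s from by ext v; rfl] at h
      · intro u hu
        rw [show (1 : H →L[ℂ] H) ∘L u ∘L s = u ∘L s from by ext v; rfl]
        exact (hP0 u hu s hs).1
    · have h := aux_lin s (1 : H →L[ℂ] H) SCm hSCc _ ?_ haC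
      · rwa [show s ∘L a ∘L (1 : H →L[ℂ] H) = s ∘L a from by ext v; rfl] at h
      · intro u hu
        rw [show s ∘L u ∘L (1 : H →L[ℂ] H) = s ∘L u from by ext v; rfl]
        exact (hP0 u hu s hs).2
  -- M as a closed submodule
  set MSm : Submodule ℂ (H →L[ℂ] K) := (Submodule.span ℂ (opMulSet Xs A)).topologicalClosure
    with hMSmdef
  have hMset : M = (MSm : Set (H →L[ℂ] K)) := hM
  have hMc : IsClosed M := by
    rw [hMset]; exact Submodule.isClosed_topologicalClosure _
  have hXAM : opMulSet Xs A ⊆ M := by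
    rw [hM]; exact subset_cSpan _
  have hXAMS : opMulSet Xs A ⊆ (MSm : Set (H →L[ℂ] K)) := by
    rw [← hMset]; exact hXAM
  have hXM : Xs ⊆ M := by
    intro x hx
    exact hXAM ⟨x, hx, 1, hA1, by ext v; rfl⟩
  have hMcSpan : ∀ {m : H →L[ℂ] K}, m ∈ M → m ∈ cSpan (opMulSet Xs A) := by
    intro m hm; rwa [hM] at hm
  refine ⟨hMc, ?_, ?_, ?_, ?_, ?_⟩
  · -- TRO property
    have stage1 : ∀ x ∈ X, ∀ a1 ∈ A, ∀ x' ∈ X, ∀ a2 ∈ A, ∀ c ∈ M,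
        ((x ∘L a1) ∘L adjoint (x' ∘L a2)) ∘L c ∘L (1 : H →L[ℂ] H) ∈ MSm := by
      intro x hx a1 ha1 x' hx' a2 ha2 c hc
      refine aux_lin ((x ∘L a1) ∘L adjoint (x' ∘L a2)) (1 : H →L[ℂ] H) MSm
        (Submodule.isClosed_topologicalClosure _) (opMulSet Xs A) ?_ (hMcSpan hc)
      intro u hu
      obtain ⟨x'', hx'', a3, ha3, rfl⟩ := hu
      have hbigA : a1 ∘L (adjoint a2 ∘L ((adjoint x' ∘L x'') ∘L a3)) ∈ A :=
        hAmul a1 ha1 _ (hAmul _ (hAstar a2 ha2) _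
          (hAmul _ (hXXA ⟨adjoint x', ⟨x', hx', rfl⟩, x'', hx'', rfl⟩) a3 ha3))
      have heq : ((x ∘L a1) ∘L adjoint (x' ∘L a2)) ∘L (x'' ∘L a3) ∘L (1 : H →L[ℂ] H) =
          x ∘L (a1 ∘L (adjoint a2 ∘L ((adjoint x' ∘L x'') ∘L a3))) := by
        rw [adjoint_comp]; ext v; rfl
      rw [heq]
      exact hXAMS ⟨x, hx, _, hbigA, rfl⟩
    have stage2 : ∀ x ∈ X, ∀ a1 ∈ A, ∀ b ∈ M, ∀ c ∈ M,
        (x ∘L a1) ∘L adjoint b ∘L c ∈ MSm := by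
      intro x hx a1 ha1 b hb c hc
      refine aux_adj (x ∘L a1) c MSm (Submodule.isClosed_topologicalClosure _)
        (opMulSet Xs A) ?_ (hMcSpan hb)
      intro u hu
      obtain ⟨x', hx', a2, ha2, rfl⟩ := hu
      have h := stage1 x hx a1 ha1 x' hx' a2 ha2 c hc
      rwa [show ((x ∘L a1) ∘L adjoint (x' ∘L a2)) ∘L c ∘L (1 : H →L[ℂ] H) =
        (x ∘L a1) ∘L adjoint (x' ∘L a2) ∘L c from by ext v; rfl] at h
    have stage3 : ∀ a ∈ M, ∀ b ∈ M, ∀ c ∈ M, a ∘L (adjoint b ∘L c) ∈ MSm := by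
      intro a ha b hb c hc
      have h := aux_lin (1 : K →L[ℂ] K) (adjoint b ∘L c) MSm
        (Submodule.isClosed_topologicalClosure _) (opMulSet Xs A) ?_ (hMcSpan ha)
      · rwa [show (1 : K →L[ℂ] K) ∘L a ∘L (adjoint b ∘L c) = a ∘L (adjoint b ∘L c) from by
          ext v; rfl] at h
      · intro u hu
        obtain ⟨x, hx, a1, ha1, rfl⟩ := hu
        have h2 := stage2 x hx a1 ha1 b hb c hc
        rwa [show (x ∘L a1) ∘L adjoint b ∘L c =
          (1 : K →L[ℂ] K) ∘L (x ∘L a1) ∘L (adjoint b ∘L c) from by ext v; rfl] at h2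
    intro a ha b hb c hc
    rw [hMset]
    exact stage3 a ha b hb c hc
  · -- nondegeneracy 1
    refine cSpan_mono ?_ hXnd1
    rintro z ⟨a, ⟨x, hx, rfl⟩, x', hx', rfl⟩
    exact ⟨adjoint x, ⟨x, hXM hx, rfl⟩, x', hXM hx', rfl⟩
  · -- nondegeneracy 2
    refine cSpan_mono ?_ hXnd2
    rintro z ⟨x, hx, a, ⟨x', hx', rfl⟩, rfl⟩
    exact ⟨x, hXM hx, adjoint x', ⟨x', hXM hx', rfl⟩, rfl⟩
  · -- M* T M ⊆ closure S
    rintro z ⟨am, ham, b, hb, rfl⟩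
    obtain ⟨m, hm, rfl⟩ := ham
    obtain ⟨t, ht, m', hm', rfl⟩ := hb
    have htC : t ∈ TCm := T.le_topologicalClosure ht
    have g5s1 : ∀ x ∈ X, ∀ a1 ∈ A, ∀ x' ∈ X, ∀ a2 ∈ A,
        (adjoint (x ∘L a1) ∘L t) ∘L (x' ∘L a2) ∘L (1 : H →L[ℂ] H) ∈ SCm := by
      intro x hx a1 ha1 x' hx' a2 ha2
      have hs0 : adjoint x ∘L t ∘L x' ∈ SCm := L1 x hx x' hx' t htC
      have h1 : adjoint a1 ∘L (adjoint x ∘L t ∘L x') ∈ SCm :=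
        (hAP (adjoint a1) (hAstar a1 ha1) _ hs0).1
      have h2 : (adjoint a1 ∘L (adjoint x ∘L t ∘L x')) ∘L a2 ∈ SCm :=
        (hAP a2 ha2 _ h1).2
      rwa [show (adjoint a1 ∘L (adjoint x ∘L t ∘L x')) ∘L a2 =
        (adjoint (x ∘L a1) ∘L t) ∘L (x' ∘L a2) ∘L (1 : H →L[ℂ] H) from by
          rw [adjoint_comp]; ext v; rfl] at h2
    have g5s2 : ∀ x ∈ X, ∀ a1 ∈ A, ∀ n ∈ M,
        (adjoint (x ∘L a1) ∘L t) ∘L n ∘L (1 : H →L[ℂ] H) ∈ SCm := by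
      intro x hx a1 ha1 n hn
      refine aux_lin (adjoint (x ∘L a1) ∘L t) (1 : H →L[ℂ] H) SCm hSCc
        (opMulSet Xs A) ?_ (hMcSpan hn)
      intro u hu
      obtain ⟨x', hx', a2, ha2, rfl⟩ := hu
      exact g5s1 x hx a1 ha1 x' hx' a2 ha2
    have g5s3 : adjoint m ∘L (t ∘L m') ∈ SCm := by
      have h := aux_adj (1 : H →L[ℂ] H) (t ∘L m') SCm hSCc (opMulSet Xs A) ?_ (hMcSpan hm)
      · rwa [show (1 : H →L[ℂ] H) ∘L adjoint m ∘L (t ∘L m') = adjoint m ∘L (t ∘L m') from by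
          ext v; rfl] at h
      · intro u hu
        obtain ⟨x, hx, a1, ha1, rfl⟩ := hu
        have h2 := g5s2 x hx a1 ha1 m' hm'
        rwa [show (adjoint (x ∘L a1) ∘L t) ∘L m' ∘L (1 : H →L[ℂ] H) =
          (1 : H →L[ℂ] H) ∘L adjoint (x ∘L a1) ∘L (t ∘L m') from by ext v; rfl] at h2
    rw [← hSCset]
    exact g5s3
  · -- M S M* ⊆ closure T
    rintro z ⟨m, hm, b, hb, rfl⟩
    obtain ⟨s, hs, am', ham', rfl⟩ := hb
    obtain ⟨m', hm', rfl⟩ := ham'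
    have hsC : s ∈ SCm := S.le_topologicalClosure hs
    have g6s1 : ∀ x ∈ X, ∀ a1 ∈ A, ∀ x' ∈ X, ∀ a2 ∈ A,
        ((x ∘L a1) ∘L s) ∘L adjoint (x' ∘L a2) ∘L (1 : K →L[ℂ] K) ∈ TCm := by
      intro x hx a1 ha1 x' hx' a2 ha2
      have hs0 : s ∘L adjoint a2 ∈ SCm := (hAP (adjoint a2) (hAstar a2 ha2) s hsC).2
      have hs1 : a1 ∘L (s ∘L adjoint a2) ∈ SCm := (hAP a1 ha1 _ hs0).1
      have h := L2 x hx x' hx' _ hs1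
      rwa [show x ∘L (a1 ∘L (s ∘L adjoint a2)) ∘L adjoint x' =
        ((x ∘L a1) ∘L s) ∘L adjoint (x' ∘L a2) ∘L (1 : K →L[ℂ] K) from by
          rw [adjoint_comp]; ext v; rfl] at h
    have g6s2 : ∀ x ∈ X, ∀ a1 ∈ A, ∀ n ∈ M,
        ((x ∘L a1) ∘L s) ∘L adjoint n ∘L (1 : K →L[ℂ] K) ∈ TCm := by
      intro x hx a1 ha1 n hn
      refine aux_adj ((x ∘L a1) ∘L s) (1 : K →L[ℂ] K) TCm hTCc
        (opMulSet Xs A) ?_ (hMcSpan hn)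
      intro u hu
      obtain ⟨x', hx', a2, ha2, rfl⟩ := hu
      exact g6s1 x hx a1 ha1 x' hx' a2 ha2
    have g6s3 : m ∘L (s ∘L adjoint m') ∈ TCm := by
      have h := aux_lin (1 : K →L[ℂ] K) (s ∘L adjoint m') TCm hTCc
        (opMulSet Xs A) ?_ (hMcSpan hm)
      · rwa [show (1 : K →L[ℂ] K) ∘L m ∘L (s ∘L adjoint m') = m ∘L (s ∘L adjoint m') from by
          ext v; rfl] at h
      · intro u hu
        obtain ⟨x, hx, a1, ha1, rfl⟩ := hu
        have h2 := g6s2 x hx a1 ha1 m' hm'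
        rwa [show ((x ∘L a1) ∘L s) ∘L adjoint m' ∘L (1 : K →L[ℂ] K) =
          (1 : K →L[ℂ] K) ∘L (x ∘L a1) ∘L (s ∘L adjoint m') from by ext v; rfl] at h2
    rw [← hTCset]
    exact g6s3
end

section
/- TRO-equivalence of concrete operator systems is transitive: if S ⊆ B(H), T ⊆ B(K), R ⊆ B(L) are operator systems such that S is TRO-equivalent to T via a non-degenerate TRO M₁ ⊆ B(H,K) and T is TRO-equivalent to R via a non-degenerate TRO M₂ ⊆ B(K,L), then setting D to be the *-algebra generated by M₁ M₁* ∪ M₂* M₂ and M₃ the closed linear span of M₂ D M₁, the space M₃ is a TRO implementing a TRO-equivalence between S and R. -/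
open ContinuousLinearMap

lemma cSpan_coe {E : Type*} [NormedAddCommGroup E] [NormedSpace ℂ E] (S : Submodule ℂ E) :
    cSpan (S : Set E) = closure (S : Set E) := by rw [cSpan, Submodule.span_eq]

lemma cSpan_add_mem {E : Type*} [NormedAddCommGroup E] [NormedSpace ℂ E] {t : Set E} {x y : E}
    (hx : x ∈ cSpan t) (hy : y ∈ cSpan t) : x + y ∈ cSpan t :=
  Submodule.add_mem (Submodule.span ℂ t).topologicalClosure hx hy

lemma cSpan_smul_mem {E : Type*} [NormedAddCommGroup E] [NormedSpace ℂ E] {t : Set E} {x : E}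
    (c : ℂ) (hx : x ∈ cSpan t) : c • x ∈ cSpan t :=
  Submodule.smul_mem (Submodule.span ℂ t).topologicalClosure c hx

lemma cSpan_zero_mem {E : Type*} [NormedAddCommGroup E] [NormedSpace ℂ E] {t : Set E} :
    (0 : E) ∈ cSpan t :=
  Submodule.zero_mem (Submodule.span ℂ t).topologicalClosure

lemma cSpanApply {E F : Type*} [NormedAddCommGroup E] [NormedSpace ℂ E]
    [NormedAddCommGroup F] [NormedSpace ℂ F]
    (s : Set E) (t : Set F) (f : E → F) (hf : Continuous f)
    (hadd : ∀ x y, f (x + y) = f x + f y)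
    (hsmul : ∀ (c : ℂ) (x : E), ∃ c' : ℂ, f (c • x) = c' • f x)
    (h0 : f 0 = 0)
    (hs : ∀ x ∈ s, f x ∈ cSpan t) :
    ∀ x ∈ cSpan s, f x ∈ cSpan t := by
  intro x hx
  have hU : IsClosed (cSpan t) := isClosed_closure
  have hspan : ∀ y ∈ (Submodule.span ℂ s : Submodule ℂ E),
      f y ∈ (Submodule.span ℂ t).topologicalClosure := by
    intro y hy
    induction hy using Submodule.span_induction with
    | mem z hz => exact hs z hz
    | zero => rw [h0]; exact Submodule.zero_mem _
    | add a b _ _ ha hb => rw [hadd]; exact Submodule.add_mem _ ha hb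
    | smul c a _ ha => obtain ⟨c', hc'⟩ := hsmul c a; rw [hc']; exact Submodule.smul_mem _ c' ha
  exact hU.closure_subset (map_mem_closure hf hx (fun y hy => hspan y hy))

lemma adj_smul {H K : Type*} [NormedAddCommGroup H] [InnerProductSpace ℂ H] [CompleteSpace H]
    [NormedAddCommGroup K] [InnerProductSpace ℂ K] [CompleteSpace K]
    (c : ℂ) (x : H →L[ℂ] K) : adjoint (c • x) = (starRingEnd ℂ) c • adjoint x :=
  map_smulₛₗ (adjoint : (H →L[ℂ] K) ≃ₗᵢ⋆[ℂ] (K →L[ℂ] H)) c x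

lemma adj_add {H K : Type*} [NormedAddCommGroup H] [InnerProductSpace ℂ H] [CompleteSpace H]
    [NormedAddCommGroup K] [InnerProductSpace ℂ K] [CompleteSpace K]
    (x y : H →L[ℂ] K) : adjoint (x + y) = adjoint x + adjoint y :=
  map_add (adjoint : (H →L[ℂ] K) ≃ₗᵢ⋆[ℂ] (K →L[ℂ] H)) x y

lemma adj_zero {H K : Type*} [NormedAddCommGroup H] [InnerProductSpace ℂ H] [CompleteSpace H]
    [NormedAddCommGroup K] [InnerProductSpace ℂ K] [CompleteSpace K] :
    adjoint (0 : H →L[ℂ] K) = 0 :=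
  map_zero (adjoint : (H →L[ℂ] K) ≃ₗᵢ⋆[ℂ] (K →L[ℂ] H))

@[fun_prop]
lemma adj_cont {H K : Type*} [NormedAddCommGroup H] [InnerProductSpace ℂ H] [CompleteSpace H]
    [NormedAddCommGroup K] [InnerProductSpace ℂ K] [CompleteSpace K] :
    Continuous (adjoint : (H →L[ℂ] K) → (K →L[ℂ] H)) :=
  (adjoint : (H →L[ℂ] K) ≃ₗᵢ⋆[ℂ] (K →L[ℂ] H)).continuous


set_option maxHeartbeats 2000000

/-- Transitivity of TRO-equivalence of concrete operator systems: if `S ∼ T` via the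
non-degenerate TRO `M₁` and `T ∼ R` via the non-degenerate TRO `M₂`, then with `D` the
*-algebra generated by `M₁ M₁* ∪ M₂* M₂` and `M₃ = [M₂ D M₁]`, the space `M₃` is a
non-degenerate TRO implementing a TRO-equivalence of `S` and `R`. -/
theorem stmt_4 {H K L : Type*} [NormedAddCommGroup H] [InnerProductSpace ℂ H] [CompleteSpace H]
    [NormedAddCommGroup K] [InnerProductSpace ℂ K] [CompleteSpace K]
    [NormedAddCommGroup L] [InnerProductSpace ℂ L] [CompleteSpace L]
    (S : Submodule ℂ (H →L[ℂ] H)) (hS1 : (1 : H →L[ℂ] H) ∈ S)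
    (hSstar : ∀ s ∈ S, adjoint s ∈ S)
    (T : Submodule ℂ (K →L[ℂ] K)) (hT1 : (1 : K →L[ℂ] K) ∈ T)
    (hTstar : ∀ t ∈ T, adjoint t ∈ T)
    (R : Submodule ℂ (L →L[ℂ] L)) (hR1 : (1 : L →L[ℂ] L) ∈ R)
    (hRstar : ∀ x ∈ R, adjoint x ∈ R)
    (M₁ : Submodule ℂ (H →L[ℂ] K))
    (hM₁tro : ∀ a ∈ M₁, ∀ b ∈ M₁, ∀ c ∈ M₁, a ∘L adjoint b ∘L c ∈ M₁)
    (hM₁nd1 : (1 : H →L[ℂ] H) ∈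
      cSpan (opMulSet (opAdjSet (M₁ : Set (H →L[ℂ] K))) (M₁ : Set (H →L[ℂ] K))))
    (hM₁nd2 : (1 : K →L[ℂ] K) ∈
      cSpan (opMulSet (M₁ : Set (H →L[ℂ] K)) (opAdjSet (M₁ : Set (H →L[ℂ] K)))))
    (hM₁S : opMulSet (opAdjSet (M₁ : Set (H →L[ℂ] K)))
        (opMulSet (T : Set (K →L[ℂ] K)) (M₁ : Set (H →L[ℂ] K)))
      ⊆ closure (S : Set (H →L[ℂ] H)))
    (hM₁T : opMulSet (M₁ : Set (H →L[ℂ] K))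
        (opMulSet (S : Set (H →L[ℂ] H)) (opAdjSet (M₁ : Set (H →L[ℂ] K))))
      ⊆ closure (T : Set (K →L[ℂ] K)))
    (M₂ : Submodule ℂ (K →L[ℂ] L))
    (hM₂tro : ∀ a ∈ M₂, ∀ b ∈ M₂, ∀ c ∈ M₂, a ∘L adjoint b ∘L c ∈ M₂)
    (hM₂nd1 : (1 : K →L[ℂ] K) ∈
      cSpan (opMulSet (opAdjSet (M₂ : Set (K →L[ℂ] L))) (M₂ : Set (K →L[ℂ] L))))
    (hM₂nd2 : (1 : L →L[ℂ] L) ∈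
      cSpan (opMulSet (M₂ : Set (K →L[ℂ] L)) (opAdjSet (M₂ : Set (K →L[ℂ] L)))))
    (hM₂T : opMulSet (opAdjSet (M₂ : Set (K →L[ℂ] L)))
        (opMulSet (R : Set (L →L[ℂ] L)) (M₂ : Set (K →L[ℂ] L)))
      ⊆ closure (T : Set (K →L[ℂ] K)))
    (hM₂R : opMulSet (M₂ : Set (K →L[ℂ] L))
        (opMulSet (T : Set (K →L[ℂ] K)) (opAdjSet (M₂ : Set (K →L[ℂ] L))))
      ⊆ closure (R : Set (L →L[ℂ] L)))
    (D : Set (K →L[ℂ] K))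
    (hD : D = ((NonUnitalStarAlgebra.adjoin ℂ
        ((opMulSet (M₁ : Set (H →L[ℂ] K)) (opAdjSet (M₁ : Set (H →L[ℂ] K)))) ∪
          (opMulSet (opAdjSet (M₂ : Set (K →L[ℂ] L))) (M₂ : Set (K →L[ℂ] L)))) :
        NonUnitalStarSubalgebra ℂ (K →L[ℂ] K)) : Set (K →L[ℂ] K)))
    (M₃ : Set (H →L[ℂ] L))
    (hM₃ : M₃ = cSpan (opMulSet (M₂ : Set (K →L[ℂ] L)) (opMulSet D (M₁ : Set (H →L[ℂ] K))))) :
    (∀ a ∈ M₃, ∀ b ∈ M₃, ∀ c ∈ M₃, a ∘L adjoint b ∘L c ∈ M₃) ∧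
    (1 : H →L[ℂ] H) ∈ cSpan (opMulSet (opAdjSet M₃) M₃) ∧
    (1 : L →L[ℂ] L) ∈ cSpan (opMulSet M₃ (opAdjSet M₃)) ∧
    opMulSet (opAdjSet M₃) (opMulSet (R : Set (L →L[ℂ] L)) M₃)
      ⊆ closure (S : Set (H →L[ℂ] H)) ∧
    opMulSet M₃ (opMulSet (S : Set (H →L[ℂ] H)) (opAdjSet M₃))
      ⊆ closure (R : Set (L →L[ℂ] L)) := by
  rw [← cSpan_coe] at hM₁S hM₁T hM₂T hM₂R
  rw [← cSpan_coe S, ← cSpan_coe R]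
  subst hM₃
  -- basic membership facts
  have hDmem : ∀ x : K →L[ℂ] K, x ∈ D ↔ x ∈ NonUnitalStarAlgebra.adjoin ℂ
      ((opMulSet (M₁ : Set (H →L[ℂ] K)) (opAdjSet (M₁ : Set (H →L[ℂ] K)))) ∪
        (opMulSet (opAdjSet (M₂ : Set (K →L[ℂ] L))) (M₂ : Set (K →L[ℂ] L)))) := by
    intro x; rw [hD]; exact Iff.rfl
  -- s1 : M₁* (closure T) M₁ ⊆ closure S
  have s1 : ∀ m ∈ M₁, ∀ m' ∈ M₁, ∀ t ∈ cSpan (T : Set (K →L[ℂ] K)),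
      adjoint m ∘L (t ∘L m') ∈ cSpan (S : Set (H →L[ℂ] H)) := by
    intro m hm m' hm'
    exact cSpanApply _ _ (fun t => adjoint m ∘L (t ∘L m')) (by fun_prop)
      (by intro x y; ext v; simp) (fun c x => ⟨c, by ext v; simp⟩) (by ext v; simp)
      (fun t ht => hM₁S ⟨adjoint m, ⟨m, hm, rfl⟩, t ∘L m', ⟨t, ht, m', hm', rfl⟩, rfl⟩)
  have s2 : ∀ m ∈ M₁, ∀ m' ∈ M₁, ∀ s ∈ cSpan (S : Set (H →L[ℂ] H)),
      m ∘L (s ∘L adjoint m') ∈ cSpan (T : Set (K →L[ℂ] K)) := by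
    intro m hm m' hm'
    exact cSpanApply _ _ (fun s => m ∘L (s ∘L adjoint m')) (by fun_prop)
      (by intro x y; ext v; simp) (fun c x => ⟨c, by ext v; simp⟩) (by ext v; simp)
      (fun s hs => hM₁T ⟨m, hm, s ∘L adjoint m', ⟨s, hs, adjoint m', ⟨m', hm', rfl⟩, rfl⟩, rfl⟩)
  have s3 : ∀ m ∈ M₂, ∀ m' ∈ M₂, ∀ r ∈ cSpan (R : Set (L →L[ℂ] L)),
      adjoint m ∘L (r ∘L m') ∈ cSpan (T : Set (K →L[ℂ] K)) := by
    intro m hm m' hm'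
    exact cSpanApply _ _ (fun r => adjoint m ∘L (r ∘L m')) (by fun_prop)
      (by intro x y; ext v; simp) (fun c x => ⟨c, by ext v; simp⟩) (by ext v; simp)
      (fun r hr => hM₂T ⟨adjoint m, ⟨m, hm, rfl⟩, r ∘L m', ⟨r, hr, m', hm', rfl⟩, rfl⟩)
  have s4 : ∀ m ∈ M₂, ∀ m' ∈ M₂, ∀ t ∈ cSpan (T : Set (K →L[ℂ] K)),
      m ∘L (t ∘L adjoint m') ∈ cSpan (R : Set (L →L[ℂ] L)) := by
    intro m hm m' hm'
    exact cSpanApply _ _ (fun t => m ∘L (t ∘L adjoint m')) (by fun_prop)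
      (by intro x y; ext v; simp) (fun c x => ⟨c, by ext v; simp⟩) (by ext v; simp)
      (fun t ht => hM₂R ⟨m, hm, t ∘L adjoint m', ⟨t, ht, adjoint m', ⟨m', hm', rfl⟩, rfl⟩, rfl⟩)
  have s5 : ∀ t ∈ cSpan (T : Set (K →L[ℂ] K)), adjoint t ∈ cSpan (T : Set (K →L[ℂ] K)) := by
    exact cSpanApply _ _ (fun t => adjoint t) (by fun_prop)
      (fun x y => adj_add x y) (fun c x => ⟨(starRingEnd ℂ) c, adj_smul c x⟩) adj_zero
      (fun t ht => subset_cSpan _ (hTstar t ht))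
  -- s6 : left absorption by generators
  have s6 : ∀ g ∈ (opMulSet (M₁ : Set (H →L[ℂ] K)) (opAdjSet (M₁ : Set (H →L[ℂ] K)))) ∪
      (opMulSet (opAdjSet (M₂ : Set (K →L[ℂ] L))) (M₂ : Set (K →L[ℂ] L))),
      ∀ t ∈ cSpan (T : Set (K →L[ℂ] K)), g ∘L t ∈ cSpan (T : Set (K →L[ℂ] K)) := by
    rintro g hg t ht
    rcases hg with hg | hg
    · obtain ⟨m, hm, b, ⟨m', hm', rfl⟩, rfl⟩ := hg
      have key : ∀ e ∈ cSpan (opMulSet (M₁ : Set (H →L[ℂ] K)) (opAdjSet (M₁ : Set (H →L[ℂ] K)))),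
          ((m ∘L adjoint m') ∘L t) ∘L e ∈ cSpan (T : Set (K →L[ℂ] K)) := by
        refine cSpanApply _ _ (fun e => ((m ∘L adjoint m') ∘L t) ∘L e) (by fun_prop)
          (by intro x y; ext v; simp) (fun c x => ⟨c, by ext v; simp⟩) (by ext v; simp) ?_
        rintro e ⟨a, ha, b, ⟨b', hb', rfl⟩, rfl⟩
        show ((m ∘L adjoint m') ∘L t) ∘L (a ∘L adjoint b') ∈ cSpan (T : Set (K →L[ℂ] K))
        have h1 : adjoint m' ∘L (t ∘L a) ∈ cSpan (S : Set (H →L[ℂ] H)) := s1 m' hm' a ha t ht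
        have h2 := s2 m hm b' hb' _ h1
        have heq : ((m ∘L adjoint m') ∘L t) ∘L (a ∘L adjoint b')
            = m ∘L ((adjoint m' ∘L (t ∘L a)) ∘L adjoint b') := by ext v; simp
        rw [heq]; exact h2
      have h1 := key 1 hM₁nd2
      have heq : ((m ∘L adjoint m') ∘L t) ∘L (1 : K →L[ℂ] K) = (m ∘L adjoint m') ∘L t := by
        ext v; simp
      rwa [heq] at h1
    · obtain ⟨a, ⟨m, hm, rfl⟩, m', hm', rfl⟩ := hg
      have key : ∀ e ∈ cSpan (opMulSet (opAdjSet (M₂ : Set (K →L[ℂ] L))) (M₂ : Set (K →L[ℂ] L))),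
          ((adjoint m ∘L m') ∘L t) ∘L e ∈ cSpan (T : Set (K →L[ℂ] K)) := by
        refine cSpanApply _ _ (fun e => ((adjoint m ∘L m') ∘L t) ∘L e) (by fun_prop)
          (by intro x y; ext v; simp) (fun c x => ⟨c, by ext v; simp⟩) (by ext v; simp) ?_
        rintro e ⟨a, ⟨a', ha', rfl⟩, b, hb, rfl⟩
        show ((adjoint m ∘L m') ∘L t) ∘L (adjoint a' ∘L b) ∈ cSpan (T : Set (K →L[ℂ] K))
        have h1 : m' ∘L (t ∘L adjoint a') ∈ cSpan (R : Set (L →L[ℂ] L)) := s4 m' hm' a' ha' t ht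
        have h2 := s3 m hm b hb _ h1
        have heq : ((adjoint m ∘L m') ∘L t) ∘L (adjoint a' ∘L b)
            = adjoint m ∘L ((m' ∘L (t ∘L adjoint a')) ∘L b) := by ext v; simp
        rw [heq]; exact h2
      have h1 := key 1 hM₂nd1
      have heq : ((adjoint m ∘L m') ∘L t) ∘L (1 : K →L[ℂ] K) = (adjoint m ∘L m') ∘L t := by
        ext v; simp
      rwa [heq] at h1
  -- generator set closed under adjoint
  have hgstar : ∀ g ∈ (opMulSet (M₁ : Set (H →L[ℂ] K)) (opAdjSet (M₁ : Set (H →L[ℂ] K)))) ∪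
      (opMulSet (opAdjSet (M₂ : Set (K →L[ℂ] L))) (M₂ : Set (K →L[ℂ] L))),
      adjoint g ∈ (opMulSet (M₁ : Set (H →L[ℂ] K)) (opAdjSet (M₁ : Set (H →L[ℂ] K)))) ∪
      (opMulSet (opAdjSet (M₂ : Set (K →L[ℂ] L))) (M₂ : Set (K →L[ℂ] L))) := by
    rintro g (⟨a, ha, b, ⟨b', hb', rfl⟩, rfl⟩ | ⟨a, ⟨a', ha', rfl⟩, b, hb, rfl⟩)
    · left
      exact ⟨b', hb', adjoint a, ⟨a, ha, rfl⟩, by rw [adjoint_comp, adjoint_adjoint]⟩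
    · right
      exact ⟨adjoint b, ⟨b, hb, rfl⟩, a', ha', by rw [adjoint_comp, adjoint_adjoint]⟩
  -- s7 : right absorption by generators
  have s7 : ∀ g ∈ (opMulSet (M₁ : Set (H →L[ℂ] K)) (opAdjSet (M₁ : Set (H →L[ℂ] K)))) ∪
      (opMulSet (opAdjSet (M₂ : Set (K →L[ℂ] L))) (M₂ : Set (K →L[ℂ] L))),
      ∀ t ∈ cSpan (T : Set (K →L[ℂ] K)), t ∘L g ∈ cSpan (T : Set (K →L[ℂ] K)) := by
    intro g hg t ht
    have heq : t ∘L g = adjoint (adjoint g ∘L adjoint t) := by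
      rw [adjoint_comp, adjoint_adjoint, adjoint_adjoint]
    rw [heq]
    exact s5 _ (s6 _ (hgstar g hg) _ (s5 t ht))
  -- s8 : absorption by all of D
  have s8 : ∀ d ∈ NonUnitalStarAlgebra.adjoin ℂ
      ((opMulSet (M₁ : Set (H →L[ℂ] K)) (opAdjSet (M₁ : Set (H →L[ℂ] K)))) ∪
        (opMulSet (opAdjSet (M₂ : Set (K →L[ℂ] L))) (M₂ : Set (K →L[ℂ] L)))),
      ∀ t ∈ cSpan (T : Set (K →L[ℂ] K)),
      d ∘L t ∈ cSpan (T : Set (K →L[ℂ] K)) ∧ t ∘L d ∈ cSpan (T : Set (K →L[ℂ] K)) := by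
    intro d hd
    induction hd using NonUnitalStarAlgebra.adjoin_induction with
    | mem x hx => exact fun t ht => ⟨s6 x hx t ht, s7 x hx t ht⟩
    | add x y hx hy ihx ihy =>
      intro t ht
      constructor
      · have heq : (x + y) ∘L t = x ∘L t + y ∘L t := add_comp x y t
        rw [heq]; exact cSpan_add_mem (ihx t ht).1 (ihy t ht).1
      · have heq : t ∘L (x + y) = t ∘L x + t ∘L y := comp_add t x y
        rw [heq]; exact cSpan_add_mem (ihx t ht).2 (ihy t ht).2
    | zero =>
      intro t ht
      constructor
      · have heq : (0 : K →L[ℂ] K) ∘L t = 0 := zero_comp t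
        rw [heq]; exact cSpan_zero_mem
      · have heq : t ∘L (0 : K →L[ℂ] K) = 0 := comp_zero t
        rw [heq]; exact cSpan_zero_mem
    | mul x y hx hy ihx ihy =>
      intro t ht
      constructor
      · have heq : (x * y) ∘L t = x ∘L (y ∘L t) := by rw [mul_def, comp_assoc]
        rw [heq]; exact (ihx _ ((ihy t ht).1)).1
      · have heq : t ∘L (x * y) = (t ∘L x) ∘L y := by rw [mul_def, ← comp_assoc]
        rw [heq]; exact (ihy _ ((ihx t ht).2)).2
    | smul c x hx ih =>
      intro t ht
      constructor
      · have heq : (c • x) ∘L t = c • (x ∘L t) := smul_comp c x t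
        rw [heq]; exact cSpan_smul_mem c (ih t ht).1
      · have heq : t ∘L (c • x) = c • (t ∘L x) := comp_smul t c x
        rw [heq]; exact cSpan_smul_mem c (ih t ht).2
    | star x hx ih =>
      intro t ht
      constructor
      · have heq : (star x) ∘L t = adjoint (adjoint t ∘L x) := by
          rw [adjoint_comp, adjoint_adjoint, star_eq_adjoint]
        rw [heq]; exact s5 _ ((ih _ (s5 t ht)).2)
      · have heq : t ∘L (star x) = adjoint (x ∘L adjoint t) := by
          rw [adjoint_comp, adjoint_adjoint, star_eq_adjoint]
        rw [heq]; exact s5 _ ((ih _ (s5 t ht)).1)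
  -- base case for the TRO property
  have base1 : ∀ p ∈ M₂, ∀ d ∈ D, ∀ q ∈ M₁, ∀ p' ∈ M₂, ∀ d' ∈ D, ∀ q' ∈ M₁,
      ∀ p'' ∈ M₂, ∀ d'' ∈ D, ∀ q'' ∈ M₁,
      (p ∘L (d ∘L q)) ∘L (adjoint (p' ∘L (d' ∘L q')) ∘L (p'' ∘L (d'' ∘L q''))) ∈
        cSpan (opMulSet (M₂ : Set (K →L[ℂ] L)) (opMulSet D (M₁ : Set (H →L[ℂ] K)))) := by
    intro p hp d hd q hq p' hp' d' hd' q' hq' p'' hp'' d'' hd'' q'' hq''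
    rw [hDmem] at hd hd' hd''
    have hmid : d * ((q ∘L adjoint q') * (adjoint d' * ((adjoint p' ∘L p'') * d''))) ∈ D := by
      rw [hDmem]
      refine mul_mem hd (mul_mem ?_ (mul_mem ?_ (mul_mem ?_ hd'')))
      · exact NonUnitalStarAlgebra.subset_adjoin ℂ _
          (Or.inl ⟨q, hq, adjoint q', ⟨q', hq', rfl⟩, rfl⟩)
      · rw [← star_eq_adjoint]; exact star_mem hd'
      · exact NonUnitalStarAlgebra.subset_adjoin ℂ _
          (Or.inr ⟨adjoint p', ⟨p', hp', rfl⟩, p'', hp'', rfl⟩)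
    have heq : (p ∘L (d ∘L q)) ∘L (adjoint (p' ∘L (d' ∘L q')) ∘L (p'' ∘L (d'' ∘L q'')))
        = p ∘L ((d * ((q ∘L adjoint q') * (adjoint d' * ((adjoint p' ∘L p'') * d'')))) ∘L q'') := by
      simp only [mul_def, adjoint_comp, comp_assoc]
    rw [heq]
    exact subset_cSpan _ ⟨p, hp, _, ⟨_, hmid, q'', hq'', rfl⟩, rfl⟩
  have step1 : ∀ p ∈ M₂, ∀ d ∈ D, ∀ q ∈ M₁, ∀ p' ∈ M₂, ∀ d' ∈ D, ∀ q' ∈ M₁,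
      ∀ c ∈ cSpan (opMulSet (M₂ : Set (K →L[ℂ] L)) (opMulSet D (M₁ : Set (H →L[ℂ] K)))),
      (p ∘L (d ∘L q)) ∘L (adjoint (p' ∘L (d' ∘L q')) ∘L c) ∈ cSpan (opMulSet (M₂ : Set (K →L[ℂ] L)) (opMulSet D (M₁ : Set (H →L[ℂ] K)))) := by
    intro p hp d hd q hq p' hp' d' hd' q' hq'
    refine cSpanApply _ _ (fun c => (p ∘L (d ∘L q)) ∘L (adjoint (p' ∘L (d' ∘L q')) ∘L c))
      (by fun_prop) (by intro x y; ext v; simp) (fun cc x => ⟨cc, by ext v; simp⟩)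
      (by ext v; simp) ?_
    rintro x ⟨p'', hp'', y, ⟨d'', hd'', q'', hq'', rfl⟩, rfl⟩
    show (p ∘L (d ∘L q)) ∘L (adjoint (p' ∘L (d' ∘L q')) ∘L (p'' ∘L (d'' ∘L q''))) ∈ _
    exact base1 p hp d hd q hq p' hp' d' hd' q' hq' p'' hp'' d'' hd'' q'' hq''
  have step2 : ∀ p ∈ M₂, ∀ d ∈ D, ∀ q ∈ M₁,
      ∀ b ∈ cSpan (opMulSet (M₂ : Set (K →L[ℂ] L)) (opMulSet D (M₁ : Set (H →L[ℂ] K)))), ∀ c ∈ cSpan (opMulSet (M₂ : Set (K →L[ℂ] L)) (opMulSet D (M₁ : Set (H →L[ℂ] K)))),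
      (p ∘L (d ∘L q)) ∘L (adjoint b ∘L c) ∈ cSpan (opMulSet (M₂ : Set (K →L[ℂ] L)) (opMulSet D (M₁ : Set (H →L[ℂ] K)))) := by
    intro p hp d hd q hq b hb c hc
    refine cSpanApply _ _ (fun b => (p ∘L (d ∘L q)) ∘L (adjoint b ∘L c))
      (by fun_prop) (by intro x y; ext v; simp [adj_add])
      (fun cc x => ⟨(starRingEnd ℂ) cc, by ext v; simp [adj_smul]⟩)
      (by ext v; simp [adj_zero]) ?_ b hb
    rintro x ⟨p', hp', y, ⟨d', hd', q', hq', rfl⟩, rfl⟩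
    show (p ∘L (d ∘L q)) ∘L (adjoint (p' ∘L (d' ∘L q')) ∘L c) ∈ _
    exact step1 p hp d hd q hq p' hp' d' hd' q' hq' c hc
  have goal1 : ∀ a ∈ cSpan (opMulSet (M₂ : Set (K →L[ℂ] L)) (opMulSet D (M₁ : Set (H →L[ℂ] K)))), ∀ b ∈ cSpan (opMulSet (M₂ : Set (K →L[ℂ] L)) (opMulSet D (M₁ : Set (H →L[ℂ] K)))), ∀ c ∈ cSpan (opMulSet (M₂ : Set (K →L[ℂ] L)) (opMulSet D (M₁ : Set (H →L[ℂ] K)))),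
      a ∘L adjoint b ∘L c ∈ cSpan (opMulSet (M₂ : Set (K →L[ℂ] L)) (opMulSet D (M₁ : Set (H →L[ℂ] K)))) := by
    intro a ha b hb c hc
    refine cSpanApply _ _ (fun a => a ∘L (adjoint b ∘L c)) (by fun_prop)
      (by intro x y; ext v; simp) (fun cc x => ⟨cc, by ext v; simp⟩) (by ext v; simp) ?_ a ha
    rintro x ⟨p, hp, y, ⟨d, hd, q, hq, rfl⟩, rfl⟩
    show (p ∘L (d ∘L q)) ∘L (adjoint b ∘L c) ∈ _
    exact step2 p hp d hd q hq b hb c hc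
  -- goal 4 : M₃* R M₃ ⊆ closure S
  have base4 : ∀ p ∈ M₂, ∀ d ∈ D, ∀ q ∈ M₁, ∀ r ∈ R, ∀ p' ∈ M₂, ∀ d' ∈ D, ∀ q' ∈ M₁,
      adjoint (p ∘L (d ∘L q)) ∘L (r ∘L (p' ∘L (d' ∘L q'))) ∈ cSpan (S : Set (H →L[ℂ] H)) := by
    intro p hp d hd q hq r hr p' hp' d' hd' q' hq'
    rw [hDmem] at hd hd'
    have h1 : adjoint p ∘L (r ∘L p') ∈ cSpan (T : Set (K →L[ℂ] K)) :=
      s3 p hp p' hp' r (subset_cSpan _ hr)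
    have h2 : adjoint d ∘L (adjoint p ∘L (r ∘L p')) ∈ cSpan (T : Set (K →L[ℂ] K)) :=
      (s8 _ (by rw [← star_eq_adjoint]; exact star_mem hd) _ h1).1
    have h3 : (adjoint d ∘L (adjoint p ∘L (r ∘L p'))) ∘L d' ∈ cSpan (T : Set (K →L[ℂ] K)) :=
      (s8 _ hd' _ h2).2
    have h4 := s1 q hq q' hq' _ h3
    have heq : adjoint (p ∘L (d ∘L q)) ∘L (r ∘L (p' ∘L (d' ∘L q')))
        = adjoint q ∘L (((adjoint d ∘L (adjoint p ∘L (r ∘L p'))) ∘L d') ∘L q') := by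
      simp only [adjoint_comp, comp_assoc]
    rw [heq]; exact h4
  have step4a : ∀ p ∈ M₂, ∀ d ∈ D, ∀ q ∈ M₁, ∀ r ∈ R, ∀ b ∈ cSpan (opMulSet (M₂ : Set (K →L[ℂ] L)) (opMulSet D (M₁ : Set (H →L[ℂ] K)))),
      adjoint (p ∘L (d ∘L q)) ∘L (r ∘L b) ∈ cSpan (S : Set (H →L[ℂ] H)) := by
    intro p hp d hd q hq r hr
    refine cSpanApply _ _ (fun b => adjoint (p ∘L (d ∘L q)) ∘L (r ∘L b)) (by fun_prop)
      (by intro x y; ext v; simp) (fun cc x => ⟨cc, by ext v; simp⟩) (by ext v; simp) ?_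
    rintro x ⟨p', hp', y, ⟨d', hd', q', hq', rfl⟩, rfl⟩
    show adjoint (p ∘L (d ∘L q)) ∘L (r ∘L (p' ∘L (d' ∘L q'))) ∈ _
    exact base4 p hp d hd q hq r hr p' hp' d' hd' q' hq'
  have step4b : ∀ a ∈ cSpan (opMulSet (M₂ : Set (K →L[ℂ] L)) (opMulSet D (M₁ : Set (H →L[ℂ] K)))), ∀ r ∈ R, ∀ b ∈ cSpan (opMulSet (M₂ : Set (K →L[ℂ] L)) (opMulSet D (M₁ : Set (H →L[ℂ] K)))),
      adjoint a ∘L (r ∘L b) ∈ cSpan (S : Set (H →L[ℂ] H)) := by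
    intro a ha r hr b hb
    refine cSpanApply _ _ (fun a => adjoint a ∘L (r ∘L b)) (by fun_prop)
      (by intro x y; ext v; simp [adj_add])
      (fun cc x => ⟨(starRingEnd ℂ) cc, by ext v; simp [adj_smul]⟩)
      (by ext v; simp [adj_zero]) ?_ a ha
    rintro x ⟨p, hp, y, ⟨d, hd, q, hq, rfl⟩, rfl⟩
    show adjoint (p ∘L (d ∘L q)) ∘L (r ∘L b) ∈ _
    exact step4a p hp d hd q hq r hr b hb
  -- goal 5 : M₃ S M₃* ⊆ closure R
  have base5 : ∀ p ∈ M₂, ∀ d ∈ D, ∀ q ∈ M₁, ∀ s ∈ S, ∀ p' ∈ M₂, ∀ d' ∈ D, ∀ q' ∈ M₁,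
      (p ∘L (d ∘L q)) ∘L (s ∘L adjoint (p' ∘L (d' ∘L q'))) ∈ cSpan (R : Set (L →L[ℂ] L)) := by
    intro p hp d hd q hq s hs p' hp' d' hd' q' hq'
    rw [hDmem] at hd hd'
    have h1 : q ∘L (s ∘L adjoint q') ∈ cSpan (T : Set (K →L[ℂ] K)) :=
      s2 q hq q' hq' s (subset_cSpan _ hs)
    have h2 : d ∘L (q ∘L (s ∘L adjoint q')) ∈ cSpan (T : Set (K →L[ℂ] K)) := (s8 _ hd _ h1).1
    have h3 : (d ∘L (q ∘L (s ∘L adjoint q'))) ∘L adjoint d' ∈ cSpan (T : Set (K →L[ℂ] K)) :=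
      (s8 _ (by rw [← star_eq_adjoint]; exact star_mem hd') _ h2).2
    have h4 := s4 p hp p' hp' _ h3
    have heq : (p ∘L (d ∘L q)) ∘L (s ∘L adjoint (p' ∘L (d' ∘L q')))
        = p ∘L ((((d ∘L (q ∘L (s ∘L adjoint q'))) ∘L adjoint d')) ∘L adjoint p') := by
      simp only [adjoint_comp, comp_assoc]
    rw [heq]; exact h4
  have step5a : ∀ p ∈ M₂, ∀ d ∈ D, ∀ q ∈ M₁, ∀ s ∈ S, ∀ b ∈ cSpan (opMulSet (M₂ : Set (K →L[ℂ] L)) (opMulSet D (M₁ : Set (H →L[ℂ] K)))),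
      (p ∘L (d ∘L q)) ∘L (s ∘L adjoint b) ∈ cSpan (R : Set (L →L[ℂ] L)) := by
    intro p hp d hd q hq s hs
    refine cSpanApply _ _ (fun b => (p ∘L (d ∘L q)) ∘L (s ∘L adjoint b)) (by fun_prop)
      (by intro x y; ext v; simp [adj_add])
      (fun cc x => ⟨(starRingEnd ℂ) cc, by ext v; simp [adj_smul]⟩)
      (by ext v; simp [adj_zero]) ?_
    rintro x ⟨p', hp', y, ⟨d', hd', q', hq', rfl⟩, rfl⟩
    show (p ∘L (d ∘L q)) ∘L (s ∘L adjoint (p' ∘L (d' ∘L q'))) ∈ _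
    exact base5 p hp d hd q hq s hs p' hp' d' hd' q' hq'
  have step5b : ∀ a ∈ cSpan (opMulSet (M₂ : Set (K →L[ℂ] L)) (opMulSet D (M₁ : Set (H →L[ℂ] K)))), ∀ s ∈ S, ∀ b ∈ cSpan (opMulSet (M₂ : Set (K →L[ℂ] L)) (opMulSet D (M₁ : Set (H →L[ℂ] K)))),
      a ∘L (s ∘L adjoint b) ∈ cSpan (R : Set (L →L[ℂ] L)) := by
    intro a ha s hs b hb
    refine cSpanApply _ _ (fun a => a ∘L (s ∘L adjoint b)) (by fun_prop)
      (by intro x y; ext v; simp) (fun cc x => ⟨cc, by ext v; simp⟩) (by ext v; simp) ?_ a ha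
    rintro x ⟨p, hp, y, ⟨d, hd, q, hq, rfl⟩, rfl⟩
    show (p ∘L (d ∘L q)) ∘L (s ∘L adjoint b) ∈ _
    exact step5a p hp d hd q hq s hs b hb
  have goal4 : opMulSet (opAdjSet (cSpan (opMulSet (M₂ : Set (K →L[ℂ] L)) (opMulSet D (M₁ : Set (H →L[ℂ] K)))))) (opMulSet (R : Set (L →L[ℂ] L)) (cSpan (opMulSet (M₂ : Set (K →L[ℂ] L)) (opMulSet D (M₁ : Set (H →L[ℂ] K))))))
      ⊆ cSpan (S : Set (H →L[ℂ] H)) := by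
    rintro x ⟨a', ⟨a, ha, rfl⟩, y, ⟨r, hr, b, hb, rfl⟩, rfl⟩
    exact step4b a ha r hr b hb
  have goal5 : opMulSet (cSpan (opMulSet (M₂ : Set (K →L[ℂ] L)) (opMulSet D (M₁ : Set (H →L[ℂ] K))))) (opMulSet (S : Set (H →L[ℂ] H)) (opAdjSet (cSpan (opMulSet (M₂ : Set (K →L[ℂ] L)) (opMulSet D (M₁ : Set (H →L[ℂ] K)))))))
      ⊆ cSpan (R : Set (L →L[ℂ] L)) := by
    rintro x ⟨a, ha, y, ⟨s, hs, b', ⟨b, hb, rfl⟩, rfl⟩, rfl⟩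
    exact step5b a ha s hs b hb
  -- membership of generators in D
  have hA11D : ∀ x ∈ opMulSet (M₁ : Set (H →L[ℂ] K)) (opAdjSet (M₁ : Set (H →L[ℂ] K))), x ∈ D := by
    intro x hx; rw [hDmem]; exact NonUnitalStarAlgebra.subset_adjoin ℂ _ (Or.inl hx)
  have hA22D : ∀ x ∈ opMulSet (opAdjSet (M₂ : Set (K →L[ℂ] L))) (M₂ : Set (K →L[ℂ] L)), x ∈ D := by
    intro x hx; rw [hDmem]; exact NonUnitalStarAlgebra.subset_adjoin ℂ _ (Or.inr hx)
  -- goal 2 : 1_H ∈ [M₃* M₃]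
  have c4 : ∀ m ∈ M₁, ∀ m' ∈ M₁, ∀ a ∈ M₂, ∀ a' ∈ M₂, ∀ b ∈ M₁, ∀ b' ∈ M₁,
      ∀ c ∈ M₂, ∀ c' ∈ M₂, ∀ d ∈ M₁, ∀ d' ∈ M₁,
      adjoint m ∘L ((adjoint a ∘L a') ∘L ((b ∘L adjoint b') ∘L ((adjoint c ∘L c') ∘L
        ((d ∘L adjoint d') ∘L m')))) ∈ cSpan (opMulSet (opAdjSet (cSpan (opMulSet (M₂ : Set (K →L[ℂ] L)) (opMulSet D (M₁ : Set (H →L[ℂ] K)))))) (cSpan (opMulSet (M₂ : Set (K →L[ℂ] L)) (opMulSet D (M₁ : Set (H →L[ℂ] K)))))) := by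
    intro m hm m' hm' a ha a' ha' b hb b' hb' c hc c' hc' d hd d' hd'
    have hmidX : (b' ∘L adjoint b) * (adjoint a' ∘L a) ∈ D := by
      rw [hDmem]
      exact mul_mem
        (NonUnitalStarAlgebra.subset_adjoin ℂ _ (Or.inl ⟨b', hb', adjoint b, ⟨b, hb, rfl⟩, rfl⟩))
        (NonUnitalStarAlgebra.subset_adjoin ℂ _ (Or.inr ⟨adjoint a', ⟨a', ha', rfl⟩, a, ha, rfl⟩))
    have hX : c ∘L ((((b' ∘L adjoint b) * (adjoint a' ∘L a))) ∘L m) ∈ cSpan (opMulSet (M₂ : Set (K →L[ℂ] L)) (opMulSet D (M₁ : Set (H →L[ℂ] K)))) :=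
      subset_cSpan _ ⟨c, hc, _, ⟨_, hmidX, m, hm, rfl⟩, rfl⟩
    have hY : c' ∘L ((d ∘L adjoint d') ∘L m') ∈ cSpan (opMulSet (M₂ : Set (K →L[ℂ] L)) (opMulSet D (M₁ : Set (H →L[ℂ] K)))) :=
      subset_cSpan _ ⟨c', hc', _, ⟨_, hA11D _ ⟨d, hd, adjoint d', ⟨d', hd', rfl⟩, rfl⟩, m', hm', rfl⟩, rfl⟩
    have hmem : adjoint (c ∘L ((((b' ∘L adjoint b) * (adjoint a' ∘L a))) ∘L m)) ∘L
        (c' ∘L ((d ∘L adjoint d') ∘L m')) ∈ cSpan (opMulSet (opAdjSet (cSpan (opMulSet (M₂ : Set (K →L[ℂ] L)) (opMulSet D (M₁ : Set (H →L[ℂ] K)))))) (cSpan (opMulSet (M₂ : Set (K →L[ℂ] L)) (opMulSet D (M₁ : Set (H →L[ℂ] K)))))) :=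
      subset_cSpan _ ⟨_, ⟨_, hX, rfl⟩, _, hY, rfl⟩
    have heq : adjoint (c ∘L ((((b' ∘L adjoint b) * (adjoint a' ∘L a))) ∘L m)) ∘L
        (c' ∘L ((d ∘L adjoint d') ∘L m'))
        = adjoint m ∘L ((adjoint a ∘L a') ∘L ((b ∘L adjoint b') ∘L ((adjoint c ∘L c') ∘L
          ((d ∘L adjoint d') ∘L m')))) := by
      simp only [mul_def, adjoint_comp, adjoint_adjoint, comp_assoc]
    rwa [heq] at hmem
  have c3 : ∀ m ∈ M₁, ∀ m' ∈ M₁, ∀ a ∈ M₂, ∀ a' ∈ M₂, ∀ b ∈ M₁, ∀ b' ∈ M₁, ∀ c ∈ M₂, ∀ c' ∈ M₂,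
      adjoint m ∘L ((adjoint a ∘L a') ∘L ((b ∘L adjoint b') ∘L ((adjoint c ∘L c') ∘L m'))) ∈ cSpan (opMulSet (opAdjSet (cSpan (opMulSet (M₂ : Set (K →L[ℂ] L)) (opMulSet D (M₁ : Set (H →L[ℂ] K)))))) (cSpan (opMulSet (M₂ : Set (K →L[ℂ] L)) (opMulSet D (M₁ : Set (H →L[ℂ] K)))))) := by
    intro m hm m' hm' a ha a' ha' b hb b' hb' c hc c' hc'
    have key := cSpanApply (opMulSet (M₁ : Set (H →L[ℂ] K)) (opAdjSet (M₁ : Set (H →L[ℂ] K)))) (opMulSet (opAdjSet (cSpan (opMulSet (M₂ : Set (K →L[ℂ] L)) (opMulSet D (M₁ : Set (H →L[ℂ] K)))))) (cSpan (opMulSet (M₂ : Set (K →L[ℂ] L)) (opMulSet D (M₁ : Set (H →L[ℂ] K))))))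
      (fun e => adjoint m ∘L ((adjoint a ∘L a') ∘L ((b ∘L adjoint b') ∘L ((adjoint c ∘L c') ∘L
        (e ∘L m'))))) (by fun_prop)
      (by intro x y; ext v; simp) (fun cc x => ⟨cc, by ext v; simp⟩) (by ext v; simp) ?_ 1 hM₁nd2
    · simpa only [one_def, id_comp] using key
    · rintro e ⟨d, hd, y, ⟨d', hd', rfl⟩, rfl⟩
      show adjoint m ∘L ((adjoint a ∘L a') ∘L ((b ∘L adjoint b') ∘L ((adjoint c ∘L c') ∘L
        ((d ∘L adjoint d') ∘L m')))) ∈ _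
      exact c4 m hm m' hm' a ha a' ha' b hb b' hb' c hc c' hc' d hd d' hd'
  have c2 : ∀ m ∈ M₁, ∀ m' ∈ M₁, ∀ a ∈ M₂, ∀ a' ∈ M₂, ∀ b ∈ M₁, ∀ b' ∈ M₁,
      adjoint m ∘L ((adjoint a ∘L a') ∘L ((b ∘L adjoint b') ∘L m')) ∈ cSpan (opMulSet (opAdjSet (cSpan (opMulSet (M₂ : Set (K →L[ℂ] L)) (opMulSet D (M₁ : Set (H →L[ℂ] K)))))) (cSpan (opMulSet (M₂ : Set (K →L[ℂ] L)) (opMulSet D (M₁ : Set (H →L[ℂ] K)))))) := by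
    intro m hm m' hm' a ha a' ha' b hb b' hb'
    have key := cSpanApply (opMulSet (opAdjSet (M₂ : Set (K →L[ℂ] L))) (M₂ : Set (K →L[ℂ] L))) (opMulSet (opAdjSet (cSpan (opMulSet (M₂ : Set (K →L[ℂ] L)) (opMulSet D (M₁ : Set (H →L[ℂ] K)))))) (cSpan (opMulSet (M₂ : Set (K →L[ℂ] L)) (opMulSet D (M₁ : Set (H →L[ℂ] K))))))
      (fun e => adjoint m ∘L ((adjoint a ∘L a') ∘L ((b ∘L adjoint b') ∘L (e ∘L m'))))
      (by fun_prop)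
      (by intro x y; ext v; simp) (fun cc x => ⟨cc, by ext v; simp⟩) (by ext v; simp) ?_ 1 hM₂nd1
    · simpa only [one_def, id_comp] using key
    · rintro e ⟨y, ⟨c, hc, rfl⟩, c', hc', rfl⟩
      show adjoint m ∘L ((adjoint a ∘L a') ∘L ((b ∘L adjoint b') ∘L ((adjoint c ∘L c') ∘L m'))) ∈ _
      exact c3 m hm m' hm' a ha a' ha' b hb b' hb' c hc c' hc'
  have c1 : ∀ m ∈ M₁, ∀ m' ∈ M₁, ∀ a ∈ M₂, ∀ a' ∈ M₂,
      adjoint m ∘L ((adjoint a ∘L a') ∘L m') ∈ cSpan (opMulSet (opAdjSet (cSpan (opMulSet (M₂ : Set (K →L[ℂ] L)) (opMulSet D (M₁ : Set (H →L[ℂ] K)))))) (cSpan (opMulSet (M₂ : Set (K →L[ℂ] L)) (opMulSet D (M₁ : Set (H →L[ℂ] K)))))) := by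
    intro m hm m' hm' a ha a' ha'
    have key := cSpanApply (opMulSet (M₁ : Set (H →L[ℂ] K)) (opAdjSet (M₁ : Set (H →L[ℂ] K)))) (opMulSet (opAdjSet (cSpan (opMulSet (M₂ : Set (K →L[ℂ] L)) (opMulSet D (M₁ : Set (H →L[ℂ] K)))))) (cSpan (opMulSet (M₂ : Set (K →L[ℂ] L)) (opMulSet D (M₁ : Set (H →L[ℂ] K))))))
      (fun e => adjoint m ∘L ((adjoint a ∘L a') ∘L (e ∘L m'))) (by fun_prop)
      (by intro x y; ext v; simp) (fun cc x => ⟨cc, by ext v; simp⟩) (by ext v; simp) ?_ 1 hM₁nd2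
    · simpa only [one_def, id_comp] using key
    · rintro e ⟨b, hb, y, ⟨b', hb', rfl⟩, rfl⟩
      show adjoint m ∘L ((adjoint a ∘L a') ∘L ((b ∘L adjoint b') ∘L m')) ∈ _
      exact c2 m hm m' hm' a ha a' ha' b hb b' hb'
  have c0 : ∀ m ∈ M₁, ∀ m' ∈ M₁, adjoint m ∘L m' ∈ cSpan (opMulSet (opAdjSet (cSpan (opMulSet (M₂ : Set (K →L[ℂ] L)) (opMulSet D (M₁ : Set (H →L[ℂ] K)))))) (cSpan (opMulSet (M₂ : Set (K →L[ℂ] L)) (opMulSet D (M₁ : Set (H →L[ℂ] K)))))) := by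
    intro m hm m' hm'
    have key := cSpanApply (opMulSet (opAdjSet (M₂ : Set (K →L[ℂ] L))) (M₂ : Set (K →L[ℂ] L))) (opMulSet (opAdjSet (cSpan (opMulSet (M₂ : Set (K →L[ℂ] L)) (opMulSet D (M₁ : Set (H →L[ℂ] K)))))) (cSpan (opMulSet (M₂ : Set (K →L[ℂ] L)) (opMulSet D (M₁ : Set (H →L[ℂ] K))))))
      (fun e => adjoint m ∘L (e ∘L m')) (by fun_prop)
      (by intro x y; ext v; simp) (fun cc x => ⟨cc, by ext v; simp⟩) (by ext v; simp) ?_ 1 hM₂nd1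
    · simpa only [one_def, id_comp] using key
    · rintro e ⟨y, ⟨a, ha, rfl⟩, a', ha', rfl⟩
      show adjoint m ∘L ((adjoint a ∘L a') ∘L m') ∈ _
      exact c1 m hm m' hm' a ha a' ha'
  have goal2 : (1 : H →L[ℂ] H) ∈ cSpan (opMulSet (opAdjSet (cSpan (opMulSet (M₂ : Set (K →L[ℂ] L)) (opMulSet D (M₁ : Set (H →L[ℂ] K)))))) (cSpan (opMulSet (M₂ : Set (K →L[ℂ] L)) (opMulSet D (M₁ : Set (H →L[ℂ] K)))))) := by
    have key := cSpanApply (opMulSet (opAdjSet (M₁ : Set (H →L[ℂ] K))) (M₁ : Set (H →L[ℂ] K))) (opMulSet (opAdjSet (cSpan (opMulSet (M₂ : Set (K →L[ℂ] L)) (opMulSet D (M₁ : Set (H →L[ℂ] K)))))) (cSpan (opMulSet (M₂ : Set (K →L[ℂ] L)) (opMulSet D (M₁ : Set (H →L[ℂ] K))))))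
      (fun e : H →L[ℂ] H => e) continuous_id (fun _ _ => rfl) (fun cc x => ⟨cc, rfl⟩) rfl ?_ 1 hM₁nd1
    · exact key
    · rintro e ⟨y, ⟨m, hm, rfl⟩, m', hm', rfl⟩
      show adjoint m ∘L m' ∈ _
      exact c0 m hm m' hm'
  -- goal 3 : 1_L ∈ [M₃ M₃*]
  have d3 : ∀ a ∈ M₂, ∀ a' ∈ M₂, ∀ b ∈ M₁, ∀ b' ∈ M₁, ∀ d ∈ M₁, ∀ d' ∈ M₁, ∀ c ∈ M₂, ∀ c' ∈ M₂,
      a ∘L ((b ∘L adjoint b') ∘L ((d ∘L adjoint d') ∘L ((adjoint c ∘L c') ∘L adjoint a'))) ∈ cSpan (opMulSet (cSpan (opMulSet (M₂ : Set (K →L[ℂ] L)) (opMulSet D (M₁ : Set (H →L[ℂ] K))))) (opAdjSet (cSpan (opMulSet (M₂ : Set (K →L[ℂ] L)) (opMulSet D (M₁ : Set (H →L[ℂ] K))))))) := by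
    intro a ha a' ha' b hb b' hb' d hd d' hd' c hc c' hc'
    have hX : a ∘L ((b ∘L adjoint b') ∘L d) ∈ cSpan (opMulSet (M₂ : Set (K →L[ℂ] L)) (opMulSet D (M₁ : Set (H →L[ℂ] K)))) :=
      subset_cSpan _ ⟨a, ha, _, ⟨_, hA11D _ ⟨b, hb, adjoint b', ⟨b', hb', rfl⟩, rfl⟩, d, hd, rfl⟩, rfl⟩
    have hY : a' ∘L ((adjoint c' ∘L c) ∘L d') ∈ cSpan (opMulSet (M₂ : Set (K →L[ℂ] L)) (opMulSet D (M₁ : Set (H →L[ℂ] K)))) :=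
      subset_cSpan _ ⟨a', ha', _, ⟨_, hA22D _ ⟨adjoint c', ⟨c', hc', rfl⟩, c, hc, rfl⟩, d', hd', rfl⟩, rfl⟩
    have hmem : (a ∘L ((b ∘L adjoint b') ∘L d)) ∘L adjoint (a' ∘L ((adjoint c' ∘L c) ∘L d')) ∈ cSpan (opMulSet (cSpan (opMulSet (M₂ : Set (K →L[ℂ] L)) (opMulSet D (M₁ : Set (H →L[ℂ] K))))) (opAdjSet (cSpan (opMulSet (M₂ : Set (K →L[ℂ] L)) (opMulSet D (M₁ : Set (H →L[ℂ] K))))))) :=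
      subset_cSpan _ ⟨_, hX, _, ⟨_, hY, rfl⟩, rfl⟩
    have heq : (a ∘L ((b ∘L adjoint b') ∘L d)) ∘L adjoint (a' ∘L ((adjoint c' ∘L c) ∘L d'))
        = a ∘L ((b ∘L adjoint b') ∘L ((d ∘L adjoint d') ∘L ((adjoint c ∘L c') ∘L adjoint a'))) := by
      simp only [adjoint_comp, adjoint_adjoint, comp_assoc]
    rwa [heq] at hmem
  have d2 : ∀ a ∈ M₂, ∀ a' ∈ M₂, ∀ b ∈ M₁, ∀ b' ∈ M₁, ∀ d ∈ M₁, ∀ d' ∈ M₁,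
      a ∘L ((b ∘L adjoint b') ∘L ((d ∘L adjoint d') ∘L adjoint a')) ∈ cSpan (opMulSet (cSpan (opMulSet (M₂ : Set (K →L[ℂ] L)) (opMulSet D (M₁ : Set (H →L[ℂ] K))))) (opAdjSet (cSpan (opMulSet (M₂ : Set (K →L[ℂ] L)) (opMulSet D (M₁ : Set (H →L[ℂ] K))))))) := by
    intro a ha a' ha' b hb b' hb' d hd d' hd'
    have key := cSpanApply (opMulSet (opAdjSet (M₂ : Set (K →L[ℂ] L))) (M₂ : Set (K →L[ℂ] L))) (opMulSet (cSpan (opMulSet (M₂ : Set (K →L[ℂ] L)) (opMulSet D (M₁ : Set (H →L[ℂ] K))))) (opAdjSet (cSpan (opMulSet (M₂ : Set (K →L[ℂ] L)) (opMulSet D (M₁ : Set (H →L[ℂ] K)))))))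
      (fun e => a ∘L ((b ∘L adjoint b') ∘L ((d ∘L adjoint d') ∘L (e ∘L adjoint a'))))
      (by fun_prop)
      (by intro x y; ext v; simp) (fun cc x => ⟨cc, by ext v; simp⟩) (by ext v; simp) ?_ 1 hM₂nd1
    · simpa only [one_def, id_comp] using key
    · rintro e ⟨y, ⟨c, hc, rfl⟩, c', hc', rfl⟩
      show a ∘L ((b ∘L adjoint b') ∘L ((d ∘L adjoint d') ∘L ((adjoint c ∘L c') ∘L adjoint a'))) ∈ _
      exact d3 a ha a' ha' b hb b' hb' d hd d' hd' c hc c' hc'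
  have d1 : ∀ a ∈ M₂, ∀ a' ∈ M₂, ∀ b ∈ M₁, ∀ b' ∈ M₁,
      a ∘L ((b ∘L adjoint b') ∘L adjoint a') ∈ cSpan (opMulSet (cSpan (opMulSet (M₂ : Set (K →L[ℂ] L)) (opMulSet D (M₁ : Set (H →L[ℂ] K))))) (opAdjSet (cSpan (opMulSet (M₂ : Set (K →L[ℂ] L)) (opMulSet D (M₁ : Set (H →L[ℂ] K))))))) := by
    intro a ha a' ha' b hb b' hb'
    have key := cSpanApply (opMulSet (M₁ : Set (H →L[ℂ] K)) (opAdjSet (M₁ : Set (H →L[ℂ] K)))) (opMulSet (cSpan (opMulSet (M₂ : Set (K →L[ℂ] L)) (opMulSet D (M₁ : Set (H →L[ℂ] K))))) (opAdjSet (cSpan (opMulSet (M₂ : Set (K →L[ℂ] L)) (opMulSet D (M₁ : Set (H →L[ℂ] K)))))))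
      (fun e => a ∘L ((b ∘L adjoint b') ∘L (e ∘L adjoint a'))) (by fun_prop)
      (by intro x y; ext v; simp) (fun cc x => ⟨cc, by ext v; simp⟩) (by ext v; simp) ?_ 1 hM₁nd2
    · simpa only [one_def, id_comp] using key
    · rintro e ⟨d, hd, y, ⟨d', hd', rfl⟩, rfl⟩
      show a ∘L ((b ∘L adjoint b') ∘L ((d ∘L adjoint d') ∘L adjoint a')) ∈ _
      exact d2 a ha a' ha' b hb b' hb' d hd d' hd'
  have d0 : ∀ a ∈ M₂, ∀ a' ∈ M₂, a ∘L adjoint a' ∈ cSpan (opMulSet (cSpan (opMulSet (M₂ : Set (K →L[ℂ] L)) (opMulSet D (M₁ : Set (H →L[ℂ] K))))) (opAdjSet (cSpan (opMulSet (M₂ : Set (K →L[ℂ] L)) (opMulSet D (M₁ : Set (H →L[ℂ] K))))))) := by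
    intro a ha a' ha'
    have key := cSpanApply (opMulSet (M₁ : Set (H →L[ℂ] K)) (opAdjSet (M₁ : Set (H →L[ℂ] K)))) (opMulSet (cSpan (opMulSet (M₂ : Set (K →L[ℂ] L)) (opMulSet D (M₁ : Set (H →L[ℂ] K))))) (opAdjSet (cSpan (opMulSet (M₂ : Set (K →L[ℂ] L)) (opMulSet D (M₁ : Set (H →L[ℂ] K)))))))
      (fun e => a ∘L (e ∘L adjoint a')) (by fun_prop)
      (by intro x y; ext v; simp) (fun cc x => ⟨cc, by ext v; simp⟩) (by ext v; simp) ?_ 1 hM₁nd2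
    · simpa only [one_def, id_comp] using key
    · rintro e ⟨b, hb, y, ⟨b', hb', rfl⟩, rfl⟩
      show a ∘L ((b ∘L adjoint b') ∘L adjoint a') ∈ _
      exact d1 a ha a' ha' b hb b' hb'
  have goal3 : (1 : L →L[ℂ] L) ∈ cSpan (opMulSet (cSpan (opMulSet (M₂ : Set (K →L[ℂ] L)) (opMulSet D (M₁ : Set (H →L[ℂ] K))))) (opAdjSet (cSpan (opMulSet (M₂ : Set (K →L[ℂ] L)) (opMulSet D (M₁ : Set (H →L[ℂ] K))))))) := by
    have key := cSpanApply (opMulSet (M₂ : Set (K →L[ℂ] L)) (opAdjSet (M₂ : Set (K →L[ℂ] L)))) (opMulSet (cSpan (opMulSet (M₂ : Set (K →L[ℂ] L)) (opMulSet D (M₁ : Set (H →L[ℂ] K))))) (opAdjSet (cSpan (opMulSet (M₂ : Set (K →L[ℂ] L)) (opMulSet D (M₁ : Set (H →L[ℂ] K)))))))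
      (fun e : L →L[ℂ] L => e) continuous_id (fun _ _ => rfl) (fun cc x => ⟨cc, rfl⟩) rfl ?_ 1 hM₂nd2
    · exact key
    · rintro e ⟨a, ha, y, ⟨a', ha', rfl⟩, rfl⟩
      show a ∘L adjoint a' ∈ _
      exact d0 a ha a' ha'
  exact ⟨goal1, goal2, goal3, goal4, goal5⟩
end

section
/- Let A ⊆ B(H) be a C*-algebra and (m_n)_{n∈ℕ} a sequence in B(H,K) such that Σ_n m_n m_n* = I_K (convergence in the strong operator topology, with Σ_n m_n m_n* ≤ I_K for all partial sums) and such that m_n* m_k commutes with every element of A for all n, k. Then the map ϑ(a) := Σ_n m_n a m_n* satisfies ϑ(a b) = ϑ(a) ϑ(b) for all a, b ∈ A; that is, ϑ is multiplicative. -/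
open ContinuousLinearMap

/-- If `(m_n) ⊆ B(H,K)` satisfies `∑ m_n m_n* = I_K` strongly with partial sums `≤ I_K`,
and each `m_n* m_k` commutes with every element of the C*-algebra `A ⊆ B(H)`, then
`ϑ(a) = ∑ m_n a m_n*` is multiplicative on `A`. -/
theorem stmt_8 {H K : Type*} [NormedAddCommGroup H] [InnerProductSpace ℂ H] [CompleteSpace H]
    [NormedAddCommGroup K] [InnerProductSpace ℂ K] [CompleteSpace K]
    (A : NonUnitalStarSubalgebra ℂ (H →L[ℂ] H)) (hAc : IsClosed (A : Set (H →L[ℂ] H)))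
    (m : ℕ → (H →L[ℂ] K))
    (hsum : ∀ ξ : K, HasSum (fun n => m n ((adjoint (m n)) ξ)) ξ)
    (hbd : ∀ F : Finset ℕ,
      ((1 : K →L[ℂ] K) - ∑ n ∈ F, m n ∘L adjoint (m n)).IsPositive)
    (hcomm : ∀ n k : ℕ, ∀ a ∈ A,
      (adjoint (m n) ∘L m k) ∘L a = a ∘L (adjoint (m n) ∘L m k))
    (θ : (H →L[ℂ] H) → (K →L[ℂ] K))
    (hθ : ∀ (a : H →L[ℂ] H) (ξ : K),
      HasSum (fun n => m n (a ((adjoint (m n)) ξ))) (θ a ξ)) :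
    ∀ a ∈ A, ∀ b ∈ A, θ (a ∘L b) = θ a ∘L θ b := by
  intro a ha b hb
  ext ξ
  -- For each n, compute the inner sum two ways.
  have key : ∀ n : ℕ,
      m n (a ((adjoint (m n)) (θ b ξ))) = m n ((adjoint (m n)) (θ (a ∘L b) ξ)) := by
    intro n
    have h2 : HasSum (fun k => (m n ∘L a ∘L adjoint (m n)) (m k (b ((adjoint (m k)) ξ))))
        ((m n ∘L a ∘L adjoint (m n)) (θ b ξ)) := (hθ b ξ).mapL _
    have h3 : HasSum (fun k => (m n ∘L adjoint (m n)) (m k ((a ∘L b) ((adjoint (m k)) ξ))))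
        ((m n ∘L adjoint (m n)) (θ (a ∘L b) ξ)) := (hθ (a ∘L b) ξ).mapL _
    have heq : (fun k => (m n ∘L a ∘L adjoint (m n)) (m k (b ((adjoint (m k)) ξ))))
        = (fun k => (m n ∘L adjoint (m n)) (m k ((a ∘L b) ((adjoint (m k)) ξ)))) := by
      funext k
      have := congrArg (fun T : H →L[ℂ] H => T (b ((adjoint (m k)) ξ))) (hcomm n k a ha)
      simp only [comp_apply] at this ⊢
      rw [← this]
    rw [heq] at h2
    exact h2.unique h3
  have h4 : HasSum (fun n => m n (a ((adjoint (m n)) (θ b ξ)))) (θ (a ∘L b) ξ) := by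
    have := hsum (θ (a ∘L b) ξ)
    simpa only [← key] using this
  have h5 := hθ a (θ b ξ)
  have := h4.unique h5
  simpa [comp_apply] using this
end

section
/- Let M ⊆ B(H,K) be a TRO, A ⊆ B(H) a C*-algebra with M* M ⊆ A, and let (m_n)_n be a sequence in M with Σ_n m_n m_n* = I_K (strong convergence, partial sums bounded by I_K). If s ∈ B(H) commutes with every element of A and satisfies s A ⊆ A (e.g., s lies in the centre of A), then ϑ(s) := Σ_n m_n s m_n* commutes with every operator of the form l₁ a l₂* with l₁, l₂ ∈ M and a ∈ A. In particular ϑ(s) lies in the commutant of the closed span of M A M*. -/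
open ContinuousLinearMap

/-- If `M` is a TRO, `A` a C*-algebra with `M* M ⊆ A`, `(m_n) ⊆ M` with
`∑ m_n m_n* = I_K` strongly, and `s` commutes with `A` and satisfies `s A ⊆ A`, then
`ϑ(s) = ∑ m_n s m_n*` commutes with every `l₁ a l₂*` (`l₁, l₂ ∈ M`, `a ∈ A`), hence
lies in the commutant of `[M A M*]`. -/
theorem stmt_9 {H K : Type*} [NormedAddCommGroup H] [InnerProductSpace ℂ H] [CompleteSpace H]
    [NormedAddCommGroup K] [InnerProductSpace ℂ K] [CompleteSpace K]
    (M : Submodule ℂ (H →L[ℂ] K))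
    (hTRO : ∀ a ∈ M, ∀ b ∈ M, ∀ c ∈ M, a ∘L adjoint b ∘L c ∈ M)
    (A : NonUnitalStarSubalgebra ℂ (H →L[ℂ] H)) (hAc : IsClosed (A : Set (H →L[ℂ] H)))
    (hMA : ∀ m₁ ∈ M, ∀ m₂ ∈ M, adjoint m₁ ∘L m₂ ∈ A)
    (m : ℕ → (H →L[ℂ] K)) (hmM : ∀ n, m n ∈ M)
    (hsum : ∀ ξ : K, HasSum (fun n => m n ((adjoint (m n)) ξ)) ξ)
    (hbd : ∀ F : Finset ℕ,
      ((1 : K →L[ℂ] K) - ∑ n ∈ F, m n ∘L adjoint (m n)).IsPositive)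
    (s : H →L[ℂ] H)
    (hcomm : ∀ a ∈ A, s ∘L a = a ∘L s)
    (hsA : ∀ a ∈ A, s ∘L a ∈ A)
    (θs : K →L[ℂ] K)
    (hθ : ∀ ξ : K, HasSum (fun n => m n (s ((adjoint (m n)) ξ))) (θs ξ)) :
    (∀ l₁ ∈ M, ∀ a ∈ A, ∀ l₂ ∈ M,
      θs ∘L (l₁ ∘L a ∘L adjoint l₂) = (l₁ ∘L a ∘L adjoint l₂) ∘L θs) ∧
    (∀ x ∈ cSpan (opMulSet (M : Set (H →L[ℂ] K))
        (opMulSet (A : Set (H →L[ℂ] H)) (opAdjSet (M : Set (H →L[ℂ] K))))),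
      θs ∘L x = x ∘L θs) := by

  have key1 : ∀ l₁ ∈ M, θs ∘L l₁ = l₁ ∘L s := by
    intro l₁ hl₁
    ext ξ
    have h1 := hθ (l₁ ξ)
    have h2 : (fun n => m n (s ((adjoint (m n)) (l₁ ξ))))
        = fun n => m n ((adjoint (m n)) (l₁ (s ξ))) := by
      funext n
      have hc := hcomm _ (hMA (m n) (hmM n) l₁ hl₁)
      have := DFunLike.congr_fun hc ξ
      simp only [comp_apply] at this
      rw [this]
    rw [h2] at h1
    have h3 := hsum (l₁ (s ξ))
    simpa using h1.unique h3
  have key2 : ∀ l₂ ∈ M, adjoint l₂ ∘L θs = s ∘L adjoint l₂ := by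
    intro l₂ hl₂
    ext ξ
    have h1 := (hθ ξ).mapL (adjoint l₂)
    have h2 : (fun n => adjoint l₂ (m n (s ((adjoint (m n)) ξ))))
        = fun n => s (adjoint l₂ (m n ((adjoint (m n)) ξ))) := by
      funext n
      have hc := hcomm _ (hMA l₂ hl₂ (m n) (hmM n))
      have := DFunLike.congr_fun hc ((adjoint (m n)) ξ)
      simp only [comp_apply] at this
      rw [this]
    rw [h2] at h1
    have h3 := (hsum ξ).mapL (s ∘L adjoint l₂)
    simp only [comp_apply] at h3
    simpa using h1.unique h3
  have part1 : ∀ l₁ ∈ M, ∀ a ∈ A, ∀ l₂ ∈ M,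
      θs ∘L (l₁ ∘L a ∘L adjoint l₂) = (l₁ ∘L a ∘L adjoint l₂) ∘L θs := by
    intro l₁ hl₁ a ha l₂ hl₂
    have k1 := key1 l₁ hl₁
    have k2 := key2 l₂ hl₂
    have ka := hcomm a ha
    ext ξ
    have e1 := DFunLike.congr_fun k1 (a ((adjoint l₂) ξ))
    have e2 := DFunLike.congr_fun k2 ξ
    have e3 := DFunLike.congr_fun ka ((adjoint l₂) ξ)
    simp only [comp_apply] at e1 e2 e3 ⊢
    rw [e1, e3, ← e2]
  refine ⟨part1, ?_⟩
  have hgen : ∀ x ∈ opMulSet (M : Set (H →L[ℂ] K))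
      (opMulSet (A : Set (H →L[ℂ] H)) (opAdjSet (M : Set (H →L[ℂ] K)))),
      θs ∘L x = x ∘L θs := by
    rintro x ⟨l₁, hl₁, y, ⟨a, ha, z, ⟨l₂, hl₂, rfl⟩, rfl⟩, rfl⟩
    have := part1 l₁ hl₁ a ha l₂ hl₂
    ext ξ
    have := DFunLike.congr_fun this ξ
    simp only [comp_apply] at this ⊢
    exact this
  set gen := opMulSet (M : Set (H →L[ℂ] K))
      (opMulSet (A : Set (H →L[ℂ] H)) (opAdjSet (M : Set (H →L[ℂ] K)))) with hgendef
  let p : Submodule ℂ (K →L[ℂ] K) :=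
    { carrier := {x | θs ∘L x = x ∘L θs}
      add_mem' := by
        intro a b ha hb
        simp only [Set.mem_setOf_eq] at *
        simp [ContinuousLinearMap.comp_add, ContinuousLinearMap.add_comp, ha, hb]
      zero_mem' := by simp
      smul_mem' := by
        intro c x hx
        simp only [Set.mem_setOf_eq] at *
        simp [ContinuousLinearMap.comp_smul, ContinuousLinearMap.smul_comp, hx] }
  have hclosed : IsClosed (p : Set (K →L[ℂ] K)) := by
    have : (p : Set (K →L[ℂ] K)) = {x | (compL ℂ K K K θs) x = ((compL ℂ K K K).flip θs) x} := by
      ext x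
      simp [p, compL_apply]
    rw [this]
    exact isClosed_eq (compL ℂ K K K θs).continuous ((compL ℂ K K K).flip θs).continuous
  have hspan : (Submodule.span ℂ gen : Set (K →L[ℂ] K)) ⊆ (p : Set (K →L[ℂ] K)) :=
    Submodule.span_le.mpr hgen
  intro x hx
  have : x ∈ (p : Set (K →L[ℂ] K)) := closure_minimal hspan hclosed hx
  exact this
end

section
/- Let G be a graph on vertex set [r] = {1,…,r} and H a graph on [ℓ] = {1,…,ℓ}, and suppose g : [r] → [N] and f : [ℓ] → [N] realize G and H as pullbacks of a common graph W on [N]. Define M := { a ∈ M_{ℓ,r}(ℂ) : a_{ij} = 0 whenever f(i) ≠ g(j) }. Then M* S_H M ⊆ S_G and M S_G M* ⊆ S_H, where S_G := span{ E_{jj'} : j ≃ j' in G } ⊆ M_r(ℂ) and S_H := span{ E_{ii'} : i ≃ i' in H } ⊆ M_ℓ(ℂ). Moreover the linear span of M* S_H M equals S_G and the linear span of M S_G M* equals S_H; in particular S_G and S_H are TRO-equivalent. -/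
open Matrix

lemma std_mul_std {p q t : ℕ} (i : Fin p) (j : Fin q) (k : Fin t) (c d : ℂ) :
    single i j c * single j k d = single i k (c * d) := by
  ext a b
  rw [mul_apply, Finset.sum_eq_single j]
  · simp only [single, of_apply, ite_and, mul_ite, mul_zero, ite_mul, zero_mul]
    by_cases h1 : i = a <;> by_cases h2 : k = b <;> simp [h1, h2]
  · intro x _ hx
    rw [single_apply_of_ne _ _ _ _ _ (by rintro ⟨-, rfl⟩; exact hx rfl), zero_mul]
  · simp

lemma conjT_std {m n : ℕ} (i : Fin m) (j : Fin n) :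
    (single i j (1:ℂ))ᴴ = single j i (1:ℂ) := by
  ext a b
  simp [conjTranspose_apply, single, and_comm]

lemma one_eq_sum_std {n : ℕ} :
    (1 : Matrix (Fin n) (Fin n) ℂ) = ∑ j, single j j (1:ℂ) := by
  ext a b
  rw [Matrix.sum_apply]
  by_cases h : a = b
  · subst h
    rw [Finset.sum_eq_single a (fun c _ hc => single_apply_of_ne _ _ _ _ _
        (by rintro ⟨rfl, -⟩; exact hc rfl)) (by simp)]
    simp
  · rw [one_apply_ne h, Finset.sum_eq_zero]
    intro c _
    exact single_apply_of_ne _ _ _ _ _ (by rintro ⟨rfl, rfl⟩; exact h rfl)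

lemma mem_span_of_support {n : ℕ} (R : Fin n → Fin n → Prop)
    (x : Matrix (Fin n) (Fin n) ℂ) (hx : ∀ j j', ¬ R j j' → x j j' = 0) :
    x ∈ Submodule.span ℂ {y : Matrix (Fin n) (Fin n) ℂ |
      ∃ j j', R j j' ∧ y = single j j' (1 : ℂ)} := by
  classical
  rw [matrix_eq_sum_single x]
  refine Submodule.sum_mem _ fun j _ => Submodule.sum_mem _ fun j' _ => ?_
  by_cases h : R j j'
  · have : single j j' (x j j') = x j j' • single j j' (1:ℂ) := by
      rw [smul_single, smul_eq_mul, mul_one]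
    rw [this]
    exact Submodule.smul_mem _ _ (Submodule.subset_span ⟨j, j', h, rfl⟩)
  · rw [hx j j' h]
    simp

lemma support_of_mem_span {n : ℕ} (R : Fin n → Fin n → Prop)
    (x : Matrix (Fin n) (Fin n) ℂ)
    (hx : x ∈ Submodule.span ℂ {y : Matrix (Fin n) (Fin n) ℂ |
      ∃ j j', R j j' ∧ y = single j j' (1 : ℂ)}) :
    ∀ j j', ¬ R j j' → x j j' = 0 := by
  induction hx using Submodule.span_induction with
  | mem y hy =>
    obtain ⟨j, j', hR, rfl⟩ := hy
    intro a b hab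
    apply single_apply_of_ne
    rintro ⟨rfl, rfl⟩
    exact hab hR
  | zero => simp
  | add y z _ _ hy hz => intro a b h; simp [hy a b h, hz a b h]
  | smul c y _ hy => intro a b h; simp [hy a b h]

/-- If `g` and `f` realize graphs `G` (on `[r]`) and `H` (on `[ℓ]`) as pullbacks of a
common graph `W` (on `[N]`), then `M = { a : a_{ij} = 0 whenever f(i) ≠ g(j) }`
satisfies `M* S_H M ⊆ S_G`, `M S_G M* ⊆ S_H`, `span(M* S_H M) = S_G`,
`span(M S_G M*) = S_H`; moreover `M` is a TRO whose algebras `span(M* M)` and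
`span(M M*)` are unital, so `S_G` and `S_H` are TRO-equivalent via `M`. -/
theorem stmt_14 {r l N : ℕ} (G : SimpleGraph (Fin r)) (Hg : SimpleGraph (Fin l))
    (W : SimpleGraph (Fin N)) (g : Fin r → Fin N) (f : Fin l → Fin N)
    (hg : Function.Surjective g) (hf : Function.Surjective f)
    (hGpull : ∀ j j' : Fin r, (G.Adj j j' ∨ j = j') ↔ (W.Adj (g j) (g j') ∨ g j = g j'))
    (hHpull : ∀ i i' : Fin l, (Hg.Adj i i' ∨ i = i') ↔ (W.Adj (f i) (f i') ∨ f i = f i'))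
    (M : Set (Matrix (Fin l) (Fin r) ℂ))
    (hM : M = {a | ∀ i j, f i ≠ g j → a i j = 0})
    (SG : Submodule ℂ (Matrix (Fin r) (Fin r) ℂ))
    (hSG : SG = Submodule.span ℂ {x | ∃ j j', (G.Adj j j' ∨ j = j') ∧
      x = Matrix.single j j' (1 : ℂ)})
    (SH : Submodule ℂ (Matrix (Fin l) (Fin l) ℂ))
    (hSH : SH = Submodule.span ℂ {x | ∃ i i', (Hg.Adj i i' ∨ i = i') ∧
      x = Matrix.single i i' (1 : ℂ)}) :
    (∀ a ∈ M, ∀ s ∈ SH, ∀ b ∈ M, aᴴ * s * b ∈ SG) ∧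
    (∀ a ∈ M, ∀ s ∈ SG, ∀ b ∈ M, a * s * bᴴ ∈ SH) ∧
    Submodule.span ℂ {x : Matrix (Fin r) (Fin r) ℂ |
        ∃ a ∈ M, ∃ s ∈ SH, ∃ b ∈ M, x = aᴴ * s * b} = SG ∧
    Submodule.span ℂ {x : Matrix (Fin l) (Fin l) ℂ |
        ∃ a ∈ M, ∃ s ∈ SG, ∃ b ∈ M, x = a * s * bᴴ} = SH ∧
    (∀ a ∈ M, ∀ b ∈ M, ∀ c ∈ M, a * bᴴ * c ∈ M) ∧
    (1 : Matrix (Fin r) (Fin r) ℂ) ∈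
      Submodule.span ℂ {x : Matrix (Fin r) (Fin r) ℂ | ∃ a ∈ M, ∃ b ∈ M, x = aᴴ * b} ∧
    (1 : Matrix (Fin l) (Fin l) ℂ) ∈
      Submodule.span ℂ {x : Matrix (Fin l) (Fin l) ℂ | ∃ a ∈ M, ∃ b ∈ M, x = a * bᴴ} := by
  subst hM hSG hSH
  set RG := fun j j' : Fin r => G.Adj j j' ∨ j = j' with hRG
  set RH := fun i i' : Fin l => Hg.Adj i i' ∨ i = i' with hRH
  -- matrix units with matching labels lie in M
  have hstdM : ∀ (i : Fin l) (j : Fin r), f i = g j →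
      single i j (1:ℂ) ∈ {a : Matrix (Fin l) (Fin r) ℂ | ∀ i j, f i ≠ g j → a i j = 0} := by
    intro i j hij i0 j0 h0
    exact single_apply_of_ne _ _ _ _ _ (by rintro ⟨rfl, rfl⟩; exact h0 hij)
  -- Part 1
  have P1 : ∀ a ∈ {a : Matrix (Fin l) (Fin r) ℂ | ∀ i j, f i ≠ g j → a i j = 0},
      ∀ s ∈ Submodule.span ℂ {x | ∃ i i', RH i i' ∧ x = single i i' (1:ℂ)},
      ∀ b ∈ {a : Matrix (Fin l) (Fin r) ℂ | ∀ i j, f i ≠ g j → a i j = 0},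
      aᴴ * s * b ∈ Submodule.span ℂ {x | ∃ j j', RG j j' ∧ x = single j j' (1:ℂ)} := by
    intro a ha s hs b hb
    apply mem_span_of_support
    intro j j' hjj
    have hsupp := support_of_mem_span _ _ hs
    rw [mul_apply, Finset.sum_eq_zero]
    intro i' _
    by_cases hb' : f i' = g j'
    · rw [mul_apply, Finset.sum_eq_zero, zero_mul]
      intro i _
      by_cases ha' : f i = g j
      · have : ¬ RH i i' := by
          rw [hRH]
          intro h
          exact hjj ((hGpull j j').mpr (by rw [← ha', ← hb']; exact (hHpull i i').mp h))
        rw [hsupp i i' this, mul_zero]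
      · rw [conjTranspose_apply, ha i j ha', star_zero, zero_mul]
    · rw [hb i' j' hb', mul_zero]
  have P2 : ∀ a ∈ {a : Matrix (Fin l) (Fin r) ℂ | ∀ i j, f i ≠ g j → a i j = 0},
      ∀ s ∈ Submodule.span ℂ {x | ∃ j j', RG j j' ∧ x = single j j' (1:ℂ)},
      ∀ b ∈ {a : Matrix (Fin l) (Fin r) ℂ | ∀ i j, f i ≠ g j → a i j = 0},
      a * s * bᴴ ∈ Submodule.span ℂ {x | ∃ i i', RH i i' ∧ x = single i i' (1:ℂ)} := by
    intro a ha s hs b hb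
    apply mem_span_of_support
    intro i i' hii
    have hsupp := support_of_mem_span _ _ hs
    rw [mul_apply, Finset.sum_eq_zero]
    intro j' _
    by_cases hb' : f i' = g j'
    · rw [mul_apply, Finset.sum_eq_zero, zero_mul]
      intro j _
      by_cases ha' : f i = g j
      · have : ¬ RG j j' := by
          rw [hRG]
          intro h
          exact hii ((hHpull i i').mpr (by rw [ha', hb']; exact (hGpull j j').mp h))
        rw [hsupp j j' this, mul_zero]
      · rw [ha i j ha', zero_mul]
    · rw [conjTranspose_apply, hb i' j' hb', star_zero, mul_zero]
  refine ⟨P1, P2, ?_, ?_, ?_, ?_, ?_⟩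
  · -- span(M* SH M) = SG
    refine le_antisymm (Submodule.span_le.mpr ?_) (Submodule.span_le.mpr ?_)
    · rintro x ⟨a, ha, s, hs, b, hb, rfl⟩
      exact P1 a ha s hs b hb
    · rintro x ⟨j, j', hjj, rfl⟩
      obtain ⟨i, hi⟩ := hf (g j)
      obtain ⟨i', hi'⟩ := hf (g j')
      have hRHii : RH i i' := (hHpull i i').mpr (by rw [hi, hi']; exact (hGpull j j').mp hjj)
      refine Submodule.subset_span ⟨single i j 1, hstdM i j hi,
        single i i' 1, Submodule.subset_span ⟨i, i', hRHii, rfl⟩,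
        single i' j' 1, hstdM i' j' hi', ?_⟩
      rw [conjT_std, std_mul_std, std_mul_std, one_mul, one_mul]
  · refine le_antisymm (Submodule.span_le.mpr ?_) (Submodule.span_le.mpr ?_)
    · rintro x ⟨a, ha, s, hs, b, hb, rfl⟩
      exact P2 a ha s hs b hb
    · rintro x ⟨i, i', hii, rfl⟩
      obtain ⟨j, hj⟩ := hg (f i)
      obtain ⟨j', hj'⟩ := hg (f i')
      have hRGjj : RG j j' := (hGpull j j').mpr (by rw [hj, hj']; exact (hHpull i i').mp hii)
      refine Submodule.subset_span ⟨single i j 1, hstdM i j hj.symm,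
        single j j' 1, Submodule.subset_span ⟨j, j', hRGjj, rfl⟩,
        single i' j' 1, hstdM i' j' hj'.symm, ?_⟩
      rw [conjT_std, std_mul_std, std_mul_std, one_mul, one_mul]
  · -- TRO
    intro a ha b hb c hc i j hij
    rw [mul_apply, Finset.sum_eq_zero]
    intro i' _
    by_cases hc' : f i' = g j
    · rw [mul_apply, Finset.sum_eq_zero, zero_mul]
      intro j' _
      by_cases ha' : f i = g j'
      · have : f i' ≠ g j' := by intro h; apply hij; rw [ha', ← h, hc']
        rw [conjTranspose_apply, hb i' j' this, star_zero, mul_zero]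
      · rw [ha i j' ha', zero_mul]
    · rw [hc i' j hc', mul_zero]
  · -- 1 ∈ span(M* M)
    rw [one_eq_sum_std]
    refine Submodule.sum_mem _ fun j _ => ?_
    obtain ⟨i, hi⟩ := hf (g j)
    refine Submodule.subset_span ⟨single i j 1, hstdM i j hi,
      single i j 1, hstdM i j hi, ?_⟩
    rw [conjT_std, std_mul_std, one_mul]
  · rw [one_eq_sum_std]
    refine Submodule.sum_mem _ fun i _ => ?_
    obtain ⟨j, hj⟩ := hg (f i)
    refine Submodule.subset_span ⟨single i j 1, hstdM i j hj.symm,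
      single i j 1, hstdM i j hj.symm, ?_⟩
    rw [conjT_std, std_mul_std, one_mul]
end
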